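/- arXiv:1906.08899 — 4 statements merged into one kernel-verified Lean document; each statement's English description precedes it below -/
import Mathlib

section
/- Let σ ∈ L²(ℝ, γ) satisfy σ(u)² ≤ c₀ exp(c₁u²/2) for some c₁ < 1. Then lim_{t→1} E_G[(σ(tG) − σ(G))/(t − 1)] = λ₂(σ), where λ₂(σ) = E_G[σ(G) He₂(G)] = E_G[σ(G)(G² − 1)] is the second Hermite coefficient of σ and G ∼ N(0,1). -/
open MeasureTheory ProbabilityTheory Real

lemma stmt2_int_eq (f : ℝ → ℝ) :
    ∫ g, f g ∂(gaussianReal 0 1) = ∫ g, gaussianPDFReal 0 1 g * f g := by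
  rw [gaussianReal_of_var_ne_zero _ one_ne_zero]
  have h : gaussianPDF 0 1 = fun x => ((gaussianPDFReal 0 1 x).toNNReal : ENNReal) := rfl
  rw [h, integral_withDensity_eq_integral_smul ((measurable_gaussianPDFReal 0 1).real_toNNReal)]
  congr 1; ext x
  simp [NNReal.smul_def, Real.coe_toNNReal _ (gaussianPDFReal_nonneg 0 1 x)]

lemma stmt2_integrable_iff (f : ℝ → ℝ) :
    Integrable f (gaussianReal 0 1) ↔ Integrable (fun x => f x * gaussianPDFReal 0 1 x) := by
  rw [gaussianReal_of_var_ne_zero _ one_ne_zero,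
    integrable_withDensity_iff (measurable_gaussianPDF 0 1)
      (ae_of_all _ fun x => ENNReal.ofReal_lt_top)]
  constructor <;> intro hh <;> refine hh.congr (ae_of_all _ fun x => ?_) <;>
    simp [gaussianPDF, ENNReal.toReal_ofReal (gaussianPDFReal_nonneg 0 1 x)]

lemma stmt2_cov (σ : ℝ → ℝ) {t : ℝ} (ht : 0 < t) :
    ∫ g, σ (t * g) ∂(gaussianReal 0 1)
      = ∫ g, σ g * (t⁻¹ * Real.exp (g^2 * (1 - (t⁻¹)^2) / 2)) ∂(gaussianReal 0 1) := by
  rw [stmt2_int_eq, stmt2_int_eq]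
  have h1 : (fun x => gaussianPDFReal 0 1 x * σ (t * x))
      = fun x => (fun u => gaussianPDFReal 0 1 (t⁻¹ * u) * σ u) (t * x) := by
    funext x
    simp only [inv_mul_cancel_left₀ ht.ne']
  rw [h1, MeasureTheory.Measure.integral_comp_mul_left
      (fun u => gaussianPDFReal 0 1 (t⁻¹ * u) * σ u) t,
    abs_of_pos (inv_pos.2 ht), smul_eq_mul, ← integral_const_mul]
  congr 1; funext u
  simp only [gaussianPDFReal, NNReal.coe_one, mul_one, sub_zero]
  have he : Real.exp (-u^2 / 2) * Real.exp (u^2 * (1 - (t⁻¹)^2) / 2)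
      = Real.exp (-(t⁻¹*u)^2 / 2) := by
    rw [← Real.exp_add]; congr 1; ring
  rw [← he]; ring

lemma stmt2_pdf_le (g : ℝ) : gaussianPDFReal 0 1 g ≤ Real.exp (-(1/2) * g^2) := by
  simp only [gaussianPDFReal, NNReal.coe_one, mul_one, sub_zero]
  have h1 : 1 ≤ Real.sqrt (2 * π) := by
    rw [show (1:ℝ) = Real.sqrt 1 by simp]
    exact Real.sqrt_le_sqrt (by nlinarith [Real.pi_gt_three])
  have h2 : (Real.sqrt (2 * π))⁻¹ ≤ 1 := by
    rw [inv_le_one_iff₀]; right; exact h1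
  calc (Real.sqrt (2 * π))⁻¹ * Real.exp (-g^2 / 2)
      ≤ 1 * Real.exp (-g^2 / 2) := by
        apply mul_le_mul_of_nonneg_right h2 (Real.exp_pos _).le
    _ = Real.exp (-(1/2) * g^2) := by rw [one_mul]; congr 1; ring

lemma stmt2_poly_integrable (a c : ℝ) {b : ℝ} (hb : 0 < b) :
    Integrable (fun x : ℝ => (a * x^2 + c) * Real.exp (-b * x^2)) volume := by
  have h2 : Integrable (fun x : ℝ => x^2 * Real.exp (-b * x^2)) volume := by
    have := integrable_rpow_mul_exp_neg_mul_sq hb (s := ((2:ℕ):ℝ)) (by norm_num)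
    refine this.congr (ae_of_all _ fun x => ?_)
    norm_num
  have h0 := integrable_exp_neg_mul_sq hb
  exact ((h2.const_mul a).add (h0.const_mul c)).congr
    (ae_of_all _ fun x => by simp only [Pi.add_apply]; ring)

lemma stmt2_int_gauss {f : ℝ → ℝ} (hm : Measurable f) {K c : ℝ} (hc : c < 1) (hK : 0 ≤ K)
    (hbd : ∀ g, |f g| ≤ (K * g^2 + K) * Real.exp (c * g^2 / 2)) :
    Integrable f (gaussianReal 0 1) := by
  rw [stmt2_integrable_iff]
  have hb : 0 < (1 - c)/2 := by linarith
  refine (stmt2_poly_integrable K K hb).mono'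
    ((hm.mul (measurable_gaussianPDFReal 0 1)).aestronglyMeasurable)
    (ae_of_all _ fun g => ?_)
  have h1 : ‖f g * gaussianPDFReal 0 1 g‖ = |f g| * gaussianPDFReal 0 1 g := by
    rw [Real.norm_eq_abs, abs_mul, abs_of_nonneg (gaussianPDFReal_nonneg 0 1 g)]
  rw [h1]
  calc |f g| * gaussianPDFReal 0 1 g
      ≤ ((K * g^2 + K) * Real.exp (c * g^2 / 2)) * Real.exp (-(1/2) * g^2) := by
        apply mul_le_mul (hbd g) (stmt2_pdf_le g) (gaussianPDFReal_nonneg 0 1 g)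
        exact mul_nonneg (by nlinarith [sq_nonneg g]) (Real.exp_pos _).le
    _ = (K * g^2 + K) * Real.exp (-((1-c)/2) * g^2) := by
        rw [mul_assoc, ← Real.exp_add]; congr 2; ring

lemma stmt2_hasDerivAt (g : ℝ) {s : ℝ} (hs : s ≠ 0) :
    HasDerivAt (fun t : ℝ => t⁻¹ * Real.exp (g^2 * (1 - (t⁻¹)^2) / 2))
      (Real.exp (g^2 * (1 - (s⁻¹)^2) / 2) * (g^2 * (s⁻¹)^4 - (s⁻¹)^2)) s := by
  have A : HasDerivAt (fun t : ℝ => t⁻¹) (-(s^2)⁻¹) s := hasDerivAt_inv hs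
  have B := ((((A.pow 2).const_sub 1).const_mul (g^2)).div_const 2).exp
  have D := A.mul B
  refine D.congr_deriv ?_
  push_cast
  simp only [Pi.pow_apply]
  field_simp
  ring

lemma stmt2_deriv_bound (g : ℝ) {s : ℝ} (hs : s ∈ Set.Icc (3/4 : ℝ) (5/4)) :
    ‖Real.exp (g^2 * (1 - (s⁻¹)^2) / 2) * (g^2 * (s⁻¹)^4 - (s⁻¹)^2)‖ ≤
      (4*g^2+2) * Real.exp (9/50 * g^2) := by
  obtain ⟨h1, h2⟩ := hs
  have hs0 : (0:ℝ) < s := by linarith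
  have hi1 : s⁻¹ ≤ 4/3 := by
    calc s⁻¹ ≤ (3/4 : ℝ)⁻¹ := by gcongr
    _ = 4/3 := by norm_num
  have hi2 : (4/5 : ℝ) ≤ s⁻¹ := by
    calc (4/5 : ℝ) = (5/4 : ℝ)⁻¹ := by norm_num
    _ ≤ s⁻¹ := by gcongr
  have hi0 : (0:ℝ) < s⁻¹ := by positivity
  have hE : Real.exp (g^2 * (1 - (s⁻¹)^2) / 2) ≤ Real.exp (9/50 * g^2) := by
    apply Real.exp_le_exp.2
    nlinarith [sq_nonneg g, sq_nonneg (s⁻¹ - 4/5)]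
  have hD : |g^2 * (s⁻¹)^4 - (s⁻¹)^2| ≤ 4*g^2 + 2 := by
    rw [abs_le]
    constructor
    · nlinarith [sq_nonneg g, sq_nonneg (s⁻¹), pow_le_pow_left₀ hi0.le hi1 4,
        sq_nonneg (g*(s⁻¹)^2)]
    · nlinarith [sq_nonneg g, pow_le_pow_left₀ hi0.le hi1 4, pow_le_pow_left₀ hi0.le hi1 2]
  calc ‖Real.exp (g^2 * (1 - (s⁻¹)^2) / 2) * (g^2 * (s⁻¹)^4 - (s⁻¹)^2)‖
      = Real.exp (g^2 * (1 - (s⁻¹)^2) / 2) * |g^2 * (s⁻¹)^4 - (s⁻¹)^2| := by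
        rw [norm_mul]; simp [Real.abs_exp]
    _ ≤ Real.exp (9/50 * g^2) * (4*g^2+2) := by
        apply mul_le_mul hE hD (abs_nonneg _) (Real.exp_pos _).le
    _ = (4*g^2+2) * Real.exp (9/50 * g^2) := by ring

lemma stmt2_slope_bound (g : ℝ) {t : ℝ} (ht : t ∈ Set.Icc (3/4 : ℝ) (5/4)) :
    |t⁻¹ * Real.exp (g^2 * (1 - (t⁻¹)^2) / 2) - 1|
      ≤ ((4*g^2+2) * Real.exp (9/50 * g^2)) * |t - 1| := by
  have h1 : (1:ℝ) ∈ Set.Icc (3/4 : ℝ) (5/4) := by norm_num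
  have key := Convex.norm_image_sub_le_of_norm_hasDerivWithin_le
    (f := fun t : ℝ => t⁻¹ * Real.exp (g^2 * (1 - (t⁻¹)^2) / 2))
    (f' := fun s => Real.exp (g^2 * (1 - (s⁻¹)^2) / 2) * (g^2 * (s⁻¹)^4 - (s⁻¹)^2))
    (C := (4*g^2+2) * Real.exp (9/50 * g^2))
    (fun x hx => (stmt2_hasDerivAt g (by
      have : (0:ℝ) < x := lt_of_lt_of_le (by norm_num) hx.1
      exact this.ne')).hasDerivWithinAt)
    (fun x hx => stmt2_deriv_bound g hx) (convex_Icc _ _) h1 ht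
  have hf1 : (1:ℝ)⁻¹ * Real.exp (g^2 * (1 - ((1:ℝ)⁻¹)^2) / 2) = 1 := by norm_num
  simp only [Real.norm_eq_abs] at key
  rw [hf1] at key
  exact key

/-- `lim_{t→1} E[(σ(tG)-σ(G))/(t-1)] = λ₂(σ) = E[σ(G)(G²-1)]`. -/
theorem stmt_2 (σ : ℝ → ℝ) (hσm : Measurable σ)
    (c₀ c₁ : ℝ) (hc₁ : c₁ < 1)
    (hσg : ∀ u, σ u ^ 2 ≤ c₀ * Real.exp (c₁ * u ^ 2 / 2)) :
    Filter.Tendsto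
      (fun t : ℝ => ∫ g, (σ (t * g) - σ g) / (t - 1) ∂(gaussianReal 0 1))
      (nhdsWithin 1 {(1 : ℝ)}ᶜ)
      (nhds (∫ g, σ g * (g ^ 2 - 1) ∂(gaussianReal 0 1))) := by
  have hc₀ : 0 ≤ c₀ := by
    have h := hσg 0
    norm_num at h
    exact le_trans (sq_nonneg _) h
  have habs : ∀ u, |σ u| ≤ Real.sqrt c₀ * Real.exp (c₁ * u^2 / 4) := by
    intro u
    have h0 : (0:ℝ) ≤ c₀ * Real.exp (c₁ * u^2/2) := le_trans (sq_nonneg _) (hσg u)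
    rw [← Real.sqrt_sq_eq_abs]
    calc Real.sqrt (σ u ^ 2) ≤ Real.sqrt (c₀ * Real.exp (c₁ * u^2/2)) :=
          Real.sqrt_le_sqrt (hσg u)
    _ = Real.sqrt c₀ * Real.sqrt (Real.exp (c₁ * u^2/2)) := Real.sqrt_mul hc₀ _
    _ = Real.sqrt c₀ * Real.exp (c₁ * u^2 / 4) := by
        rw [← Real.exp_half]; congr 2; ring
  have hsq : (0:ℝ) ≤ Real.sqrt c₀ := Real.sqrt_nonneg _
  set μ := gaussianReal 0 1 with hμ
  -- integrability of σ
  have I1 : Integrable σ μ := by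
    refine stmt2_int_gauss hσm (K := Real.sqrt c₀) (c := c₁/2) (by linarith) (by positivity) fun g => ?_
    calc |σ g| ≤ Real.sqrt c₀ * Real.exp (c₁ * g^2 / 4) := habs g
    _ ≤ (Real.sqrt c₀ * g^2 + Real.sqrt c₀) * Real.exp (c₁/2 * g^2 / 2) := by
        apply mul_le_mul (by nlinarith [sq_nonneg g]) (by apply Real.exp_le_exp.2; ring_nf; exact le_refl _)
          (Real.exp_pos _).le (by positivity)
  -- integrability of σ (t ·)
  have I2 : ∀ t ∈ Set.Icc (3/4:ℝ) (5/4), Integrable (fun g => σ (t * g)) μ := by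
    intro t ht
    obtain ⟨ht1, ht2⟩ := ht
    have ht2' : t^2 ≤ 25/16 := by nlinarith
    have hct : c₁ * t^2 / 2 < 1 := by
      rcases le_or_gt c₁ 0 with h | h
      · nlinarith [sq_nonneg t]
      · nlinarith
    refine stmt2_int_gauss (hσm.comp (measurable_const_mul t))
      (K := Real.sqrt c₀) (c := c₁ * t^2 / 2) hct (by positivity) fun g => ?_
    calc |σ (t * g)| ≤ Real.sqrt c₀ * Real.exp (c₁ * (t*g)^2 / 4) := habs (t * g)
    _ = Real.sqrt c₀ * Real.exp ((c₁ * t^2 / 2) * g^2 / 2) := by congr 2; ring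
    _ ≤ (Real.sqrt c₀ * g^2 + Real.sqrt c₀) * Real.exp ((c₁ * t^2 / 2) * g^2 / 2) := by
        apply mul_le_mul_of_nonneg_right (by nlinarith [sq_nonneg g]) (Real.exp_pos _).le
  -- integrability of σ · H t
  have I3 : ∀ t ∈ Set.Icc (3/4:ℝ) (5/4),
      Integrable (fun g => σ g * (t⁻¹ * Real.exp (g^2 * (1 - (t⁻¹)^2) / 2))) μ := by
    intro t ht
    obtain ⟨ht1, ht2⟩ := ht
    have ht0 : (0:ℝ) < t := by linarith
    have hi1 : t⁻¹ ≤ 4/3 := by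
      calc t⁻¹ ≤ (3/4 : ℝ)⁻¹ := by gcongr
      _ = 4/3 := by norm_num
    have hi2 : (4/5 : ℝ) ≤ t⁻¹ := by
      calc (4/5 : ℝ) = (5/4 : ℝ)⁻¹ := by norm_num
      _ ≤ t⁻¹ := by gcongr
    have hme : Measurable (fun g : ℝ => σ g * (t⁻¹ * Real.exp (g^2 * (1 - (t⁻¹)^2) / 2))) := by
      fun_prop
    refine stmt2_int_gauss hme (K := 4/3 * Real.sqrt c₀) (c := c₁/2 + 9/25)
      (by linarith) (by positivity) fun g => ?_
    have hH : |t⁻¹ * Real.exp (g^2 * (1 - (t⁻¹)^2) / 2)|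
        ≤ 4/3 * Real.exp ((9/25) * g^2 / 2) := by
      rw [abs_mul, abs_of_pos (inv_pos.2 ht0), Real.abs_exp]
      apply mul_le_mul hi1 (Real.exp_le_exp.2 (by nlinarith [sq_nonneg g, sq_nonneg (t⁻¹ - 4/5)]))
        (Real.exp_pos _).le (by norm_num)
    calc |σ g * (t⁻¹ * Real.exp (g^2 * (1 - (t⁻¹)^2) / 2))|
        = |σ g| * |t⁻¹ * Real.exp (g^2 * (1 - (t⁻¹)^2) / 2)| := abs_mul _ _
      _ ≤ (Real.sqrt c₀ * Real.exp (c₁ * g^2 / 4)) * (4/3 * Real.exp ((9/25) * g^2 / 2)) := by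
          apply mul_le_mul (habs g) hH (abs_nonneg _) (by positivity)
      _ = (4/3 * Real.sqrt c₀) * Real.exp ((c₁/2 + 9/25) * g^2 / 2) := by
          rw [mul_mul_mul_comm, ← Real.exp_add, mul_comm (Real.sqrt c₀) (4/3 : ℝ)]
          congr 2
          ring
      _ ≤ ((4/3 * Real.sqrt c₀) * g^2 + (4/3 * Real.sqrt c₀))
            * Real.exp ((c₁/2 + 9/25) * g^2 / 2) := by
          apply mul_le_mul_of_nonneg_right (by nlinarith [sq_nonneg g]) (Real.exp_pos _).le
  -- the dominating function is integrable
  have I4 : Integrable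
      (fun g => (Real.sqrt c₀ * Real.exp (c₁ * g^2 / 4))
        * ((4*g^2+2) * Real.exp (9/50 * g^2))) μ := by
    have hme : Measurable (fun g : ℝ => (Real.sqrt c₀ * Real.exp (c₁ * g^2 / 4))
        * ((4*g^2+2) * Real.exp (9/50 * g^2))) := by fun_prop
    refine stmt2_int_gauss hme (K := 6 * Real.sqrt c₀) (c := c₁/2 + 9/25)
      (by linarith) (by positivity) fun g => ?_
    have hnn : (0:ℝ) ≤ (Real.sqrt c₀ * Real.exp (c₁ * g^2 / 4))
        * ((4*g^2+2) * Real.exp (9/50 * g^2)) := by positivity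
    rw [abs_of_nonneg hnn]
    calc (Real.sqrt c₀ * Real.exp (c₁ * g^2 / 4)) * ((4*g^2+2) * Real.exp (9/50 * g^2))
        = (Real.sqrt c₀ * (4*g^2+2)) * Real.exp ((c₁/2 + 9/25) * g^2 / 2) := by
          rw [mul_mul_mul_comm, ← Real.exp_add]
          congr 2
          ring
      _ ≤ ((6 * Real.sqrt c₀) * g^2 + 6 * Real.sqrt c₀)
            * Real.exp ((c₁/2 + 9/25) * g^2 / 2) := by
          apply mul_le_mul_of_nonneg_right (by nlinarith [sq_nonneg g]) (Real.exp_pos _).le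
  have hIcc : Set.Icc (3/4:ℝ) (5/4) ∈ nhdsWithin 1 {(1:ℝ)}ᶜ :=
    mem_nhdsWithin_of_mem_nhds (Icc_mem_nhds (by norm_num) (by norm_num))
  -- main DCT step
  have main : Filter.Tendsto
      (fun t : ℝ => ∫ g, σ g * ((t⁻¹ * Real.exp (g^2 * (1 - (t⁻¹)^2) / 2) - 1) / (t - 1)) ∂μ)
      (nhdsWithin 1 {(1 : ℝ)}ᶜ)
      (nhds (∫ g, σ g * (g ^ 2 - 1) ∂μ)) := by
    apply tendsto_integral_filter_of_dominated_convergence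
      (bound := fun g => (Real.sqrt c₀ * Real.exp (c₁ * g^2 / 4))
        * ((4*g^2+2) * Real.exp (9/50 * g^2)))
    · exact Filter.Eventually.of_forall fun t =>
        (hσm.mul (by fun_prop)).aestronglyMeasurable
    · filter_upwards [hIcc, self_mem_nhdsWithin] with t ht ht1
      refine ae_of_all _ fun g => ?_
      have htne : t - 1 ≠ 0 := sub_ne_zero.2 ht1
      have hC : |t⁻¹ * Real.exp (g^2 * (1 - (t⁻¹)^2) / 2) - 1| / |t - 1|
          ≤ (4*g^2+2) * Real.exp (9/50 * g^2) := by
        rw [div_le_iff₀ (abs_pos.2 htne)]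
        exact stmt2_slope_bound g ht
      calc ‖σ g * ((t⁻¹ * Real.exp (g^2 * (1 - (t⁻¹)^2) / 2) - 1) / (t - 1))‖
          = |σ g| * (|t⁻¹ * Real.exp (g^2 * (1 - (t⁻¹)^2) / 2) - 1| / |t - 1|) := by
            rw [Real.norm_eq_abs, abs_mul, abs_div]
        _ ≤ |σ g| * ((4*g^2+2) * Real.exp (9/50 * g^2)) :=
            mul_le_mul_of_nonneg_left hC (abs_nonneg _)
        _ ≤ (Real.sqrt c₀ * Real.exp (c₁ * g^2 / 4)) * ((4*g^2+2) * Real.exp (9/50 * g^2)) :=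
            mul_le_mul_of_nonneg_right (habs g) (by positivity)
    · exact I4
    · refine ae_of_all _ fun g => ?_
      have hval : Real.exp (g ^ 2 * (1 - ((1:ℝ)⁻¹) ^ 2) / 2)
          * (g ^ 2 * ((1:ℝ)⁻¹) ^ 4 - ((1:ℝ)⁻¹) ^ 2) = g ^ 2 - 1 := by norm_num
      have hd' : HasDerivAt (fun t : ℝ => t⁻¹ * Real.exp (g^2 * (1 - (t⁻¹)^2) / 2))
          (g ^ 2 - 1) 1 := hval ▸ stmt2_hasDerivAt g one_ne_zero
      have hsl := hasDerivAt_iff_tendsto_slope.mp hd'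
      have heq : ∀ᶠ t in nhdsWithin 1 {(1:ℝ)}ᶜ,
          slope (fun t : ℝ => t⁻¹ * Real.exp (g^2 * (1 - (t⁻¹)^2) / 2)) 1 t
            = (t⁻¹ * Real.exp (g^2 * (1 - (t⁻¹)^2) / 2) - 1) / (t - 1) := by
        filter_upwards [self_mem_nhdsWithin] with t ht
        rw [slope_def_field]
        norm_num
      exact (Filter.Tendsto.congr' heq hsl).const_mul (σ g)
  -- transfer to the original expression
  refine Filter.Tendsto.congr' ?_ main
  filter_upwards [hIcc, self_mem_nhdsWithin] with t ht ht1
  have ht0 : (0:ℝ) < t := lt_of_lt_of_le (by norm_num) ht.1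
  calc ∫ g, σ g * ((t⁻¹ * Real.exp (g^2 * (1 - (t⁻¹)^2) / 2) - 1) / (t - 1)) ∂μ
      = ∫ g, (σ g * (t⁻¹ * Real.exp (g^2 * (1 - (t⁻¹)^2) / 2)) - σ g) / (t - 1) ∂μ := by
        apply integral_congr_ae (ae_of_all _ fun g => ?_)
        ring
    _ = (∫ g, (σ g * (t⁻¹ * Real.exp (g^2 * (1 - (t⁻¹)^2) / 2)) - σ g) ∂μ) / (t - 1) :=
        integral_div _ _
    _ = ((∫ g, σ g * (t⁻¹ * Real.exp (g^2 * (1 - (t⁻¹)^2) / 2)) ∂μ) - ∫ g, σ g ∂μ) / (t - 1) := by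
        rw [integral_sub (I3 t ht) I1]
    _ = ((∫ g, σ (t * g) ∂μ) - ∫ g, σ g ∂μ) / (t - 1) := by rw [stmt2_cov σ ht0]
    _ = ∫ g, (σ (t * g) - σ g) / (t - 1) ∂μ := by
        rw [← integral_sub (I2 t ht) I1, ← integral_div]
end

section
/- Let σ ∈ L²(ℝ, γ) satisfy σ(u)² ≤ c₀ exp(c₁u²/2) for some c₁ < 1. Then lim_{t→1} E_G[(G² − 1)(σ(tG) − σ(G))]/(t − 1) = λ₄(σ) + 2λ₂(σ), where λ_k(σ) = E_G[σ(G) He_k(G)] and G ∼ N(0,1). -/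
open MeasureTheory ProbabilityTheory Real
open scoped ENNReal NNReal

/-- kernel after change of variables: `K u s = (u²s³ - s) e^{-(us)²/2}` where `s = 1/t`. -/
noncomputable def stmt3Kf (u s : ℝ) : ℝ := (u^2*s^3 - s) * Real.exp (-(u*s)^2/2)

/-- derivative of `stmt3Kf u` in `s`. -/
noncomputable def stmt3Kd (u s : ℝ) : ℝ :=
  (3*u^2*s^2 - 1 - (u^2*s^3 - s)*(u^2*s)) * Real.exp (-(u*s)^2/2)

lemma stmt3_hasDerivAt_Kf (u s : ℝ) : HasDerivAt (stmt3Kf u) (stmt3Kd u s) s := by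
  have hlin : HasDerivAt (fun s : ℝ => u*s) u s := by
    simpa using (hasDerivAt_id s).const_mul u
  have h2 := ((hlin.pow 2).neg.div_const 2).exp
  have h1 : HasDerivAt (fun s : ℝ => u^2*s^3 - s) (u^2*(3*s^2) - 1) s := by
    have := ((hasDerivAt_pow 3 s).const_mul (u^2)).sub (hasDerivAt_id s)
    simp at this; exact this
  have := h1.mul h2
  refine HasDerivAt.congr_deriv this ?_
  simp only [stmt3Kd, stmt3Kf, Pi.pow_apply, Pi.neg_apply]
  ring

lemma stmt3_hasDerivAt_Kinv (u t : ℝ) (ht : t ≠ 0) :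
    HasDerivAt (fun t : ℝ => stmt3Kf u t⁻¹) (stmt3Kd u t⁻¹ * (-(t^2)⁻¹)) t := by
  have := (stmt3_hasDerivAt_Kf u t⁻¹).comp t (hasDerivAt_inv ht)
  simpa [Function.comp_def] using this

lemma stmt3_integrable_pow_gauss (n : ℕ) {b : ℝ} (hb : 0 < b) :
    Integrable (fun x : ℝ => x ^ n * Real.exp (-b * x^2)) := by
  have hs : (-1 : ℝ) < (n : ℝ) := lt_of_lt_of_le (by norm_num) (Nat.cast_nonneg n)
  have := integrable_rpow_mul_exp_neg_mul_sq hb hs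
  simpa [Real.rpow_natCast] using this

lemma stmt3_integrable_polyGauss (a b c : ℝ) {d : ℝ} (hd : 0 < d) :
    Integrable (fun u : ℝ => (a + b*u^2 + c*u^4) * Real.exp (-d * u^2)) := by
  have h0 := (stmt3_integrable_pow_gauss 0 hd).const_mul a
  have h2 := (stmt3_integrable_pow_gauss 2 hd).const_mul b
  have h4 := (stmt3_integrable_pow_gauss 4 hd).const_mul c
  have := (h0.add h2).add h4
  refine this.congr ?_
  filter_upwards with x
  simp only [Pi.add_apply]
  ring

lemma stmt3_integrable_of_le_polyGauss {f : ℝ → ℝ} (hf : AEStronglyMeasurable f volume)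
    {a b c d : ℝ} (hd : 0 < d)
    (h : ∀ u, |f u| ≤ (a + b*u^2 + c*u^4) * Real.exp (-d * u^2)) : Integrable f :=
  (stmt3_integrable_polyGauss a b c hd).mono' hf
    (Filter.Eventually.of_forall (by simpa [Real.norm_eq_abs] using h))

lemma stmt3_pdf_eq : gaussianPDF 0 1
    = fun x => ((Real.toNNReal ((Real.sqrt (2*Real.pi))⁻¹ * Real.exp (-x^2/2)) : ℝ≥0) : ℝ≥0∞) := by
  funext x
  rw [gaussianPDF]
  congr 1
  simp [gaussianPDFReal]

/-- Expectation against the standard gaussian as a Lebesgue integral. -/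
lemma stmt3_integral_gauss_eq (f : ℝ → ℝ) :
    ∫ g, f g ∂(gaussianReal 0 1)
      = ∫ x, ((Real.sqrt (2*Real.pi))⁻¹ * Real.exp (-x^2/2)) * f x := by
  rw [gaussianReal_of_var_ne_zero 0 one_ne_zero, stmt3_pdf_eq,
    integral_withDensity_eq_integral_smul (by measurability) f]
  congr 1
  funext x
  rw [NNReal.smul_def, Real.coe_toNNReal _ (by positivity), smul_eq_mul]

lemma stmt3_gauss_integrable_iff (f : ℝ → ℝ) :
    Integrable f (gaussianReal 0 1)
      ↔ Integrable (fun x => ((Real.sqrt (2*Real.pi))⁻¹ * Real.exp (-x^2/2)) * f x) volume := by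
  rw [gaussianReal_of_var_ne_zero 0 one_ne_zero, stmt3_pdf_eq,
    integrable_withDensity_iff_integrable_smul (by measurability)]
  constructor <;> intro h <;> refine h.congr ?_ <;> filter_upwards with x <;>
    rw [NNReal.smul_def, Real.coe_toNNReal _ (by positivity), smul_eq_mul]

set_option maxHeartbeats 2000000 in
/-- `lim_{t→1} E[(G²-1)(σ(tG)-σ(G))]/(t-1) = λ₄(σ) + 2 λ₂(σ)`,
where `λ₂(σ) = E[σ(G)(G²-1)]` and `λ₄(σ) = E[σ(G)(G⁴-6G²+3)]` are the Hermite
coefficients of `σ`. -/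
theorem stmt_3 (σ : ℝ → ℝ) (hσm : Measurable σ)
    (c₀ c₁ : ℝ) (hc₁ : c₁ < 1)
    (hσg : ∀ u, σ u ^ 2 ≤ c₀ * Real.exp (c₁ * u ^ 2 / 2)) :
    Filter.Tendsto
      (fun t : ℝ => (∫ g, (g ^ 2 - 1) * (σ (t * g) - σ g) ∂(gaussianReal 0 1)) / (t - 1))
      (nhdsWithin 1 {(1 : ℝ)}ᶜ)
      (nhds ((∫ g, σ g * (g ^ 4 - 6 * g ^ 2 + 3) ∂(gaussianReal 0 1))
        + 2 * ∫ g, σ g * (g ^ 2 - 1) ∂(gaussianReal 0 1))) := by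
  classical
  set m : ℝ := max c₁ (2/3) with hm_def
  have hm23 : (2:ℝ)/3 ≤ m := le_max_right _ _
  have hm0 : (0:ℝ) < m := lt_of_lt_of_le (by norm_num) hm23
  have hm1 : m < 1 := max_lt hc₁ (by norm_num)
  have hcm : c₁ ≤ m := le_max_left _ _
  have hmiv : m * m⁻¹ = 1 := mul_inv_cancel₀ hm0.ne'
  have hmivpos : (0:ℝ) < m⁻¹ := inv_pos.mpr hm0
  have hminv : (1:ℝ) < m⁻¹ := by nlinarith
  have hminv32 : m⁻¹ ≤ 3/2 := by nlinarith
  have hc₀ : 0 ≤ c₀ := by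
    have h := hσg 0
    simp only [ne_eq, OfNat.ofNat_ne_zero, not_false_eq_true, zero_pow, mul_zero, zero_div,
      Real.exp_zero, mul_one] at h
    nlinarith [sq_nonneg (σ 0)]
  set c : ℝ := Real.sqrt c₀ with hc_def
  have hcnn : 0 ≤ c := Real.sqrt_nonneg _
  -- pointwise bound on σ
  have hσabs : ∀ u : ℝ, |σ u| ≤ c * Real.exp (m * u^2/4) := by
    intro u
    have hexp2 : Real.exp (m*u^2/4) ^ 2 = Real.exp (m*u^2/2) := by
      rw [sq, ← Real.exp_add]; congr 1; ring
    have h1 : σ u ^ 2 ≤ (c * Real.exp (m*u^2/4))^2 := by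
      have h2 : (c * Real.exp (m*u^2/4))^2 = c₀ * Real.exp (m*u^2/2) := by
        rw [mul_pow, hc_def, Real.sq_sqrt hc₀, hexp2]
      have h3 : c₀ * Real.exp (c₁ * u^2/2) ≤ c₀ * Real.exp (m*u^2/2) := by
        apply mul_le_mul_of_nonneg_left _ hc₀
        apply Real.exp_le_exp.mpr
        nlinarith [sq_nonneg u]
      rw [h2]
      exact le_trans (hσg u) h3
    calc |σ u| = Real.sqrt (σ u ^ 2) := (Real.sqrt_sq_eq_abs _).symm
      _ ≤ Real.sqrt ((c * Real.exp (m*u^2/4))^2) := Real.sqrt_le_sqrt h1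
      _ = c * Real.exp (m*u^2/4) := Real.sqrt_sq (by positivity)
  set ε : ℝ := m⁻¹ - 1 with hε_def
  have hε : 0 < ε := sub_pos.mpr hminv
  have hball : ∀ t ∈ Metric.ball (1:ℝ) ε, 1/2 < t ∧ t < m⁻¹ := by
    intro t ht
    rw [Metric.mem_ball, Real.dist_eq] at ht
    have h := abs_lt.mp ht
    rw [hε_def] at h
    constructor
    · nlinarith [h.1, hminv32]
    · nlinarith [h.2]
  -- integrability over the gaussian measure
  have hIntγ : ∀ t : ℝ, 0 < t → t < m⁻¹ →
      Integrable (fun g => (g^2-1)*σ (t*g)) (gaussianReal 0 1) := by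
    intro t ht0 ht1
    rw [stmt3_gauss_integrable_iff]
    have hmt2 : m * t^2 ≤ 3/2 := by
      have h1 : t^2 < m⁻¹ * m⁻¹ := by nlinarith
      nlinarith [mul_lt_mul_of_pos_left h1 hm0]
    refine stmt3_integrable_of_le_polyGauss (a := (Real.sqrt (2*Real.pi))⁻¹ * c)
      (b := (Real.sqrt (2*Real.pi))⁻¹ * c) (c := 0) (d := 1/8) ?_ (by norm_num) ?_
    · apply Measurable.aestronglyMeasurable
      apply Measurable.mul
      · fun_prop
      · exact ((measurable_id.pow_const 2).sub measurable_const).mul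
          (hσm.comp (measurable_id.const_mul t))
    · intro x
      have hφ : |(Real.sqrt (2*Real.pi))⁻¹ * Real.exp (-x^2/2)|
          = (Real.sqrt (2*Real.pi))⁻¹ * Real.exp (-x^2/2) := abs_of_nonneg (by positivity)
      have habs2 : |x^2 - 1| ≤ x^2 + 1 := abs_le.mpr ⟨by nlinarith [sq_nonneg x], by nlinarith⟩
      have hexp : Real.exp (m*(t*x)^2/4) * Real.exp (-x^2/2) ≤ Real.exp (-(1/8) * x^2) := by
        rw [← Real.exp_add]
        apply Real.exp_le_exp.mpr
        have : m * (t*x)^2 = (m*t^2) * x^2 := by ring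
        nlinarith [mul_le_mul_of_nonneg_right hmt2 (sq_nonneg x)]
      calc |((Real.sqrt (2*Real.pi))⁻¹ * Real.exp (-x^2/2)) * ((x^2-1)*σ (t*x))|
          = ((Real.sqrt (2*Real.pi))⁻¹ * Real.exp (-x^2/2)) * (|x^2-1| * |σ (t*x)|) := by
            rw [abs_mul, hφ, abs_mul]
        _ ≤ ((Real.sqrt (2*Real.pi))⁻¹ * Real.exp (-x^2/2))
              * ((x^2+1) * (c * Real.exp (m*(t*x)^2/4))) := by
            gcongr
            exact hσabs _
        _ = ((Real.sqrt (2*Real.pi))⁻¹ * c) * (x^2+1)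
              * (Real.exp (m*(t*x)^2/4) * Real.exp (-x^2/2)) := by ring
        _ ≤ ((Real.sqrt (2*Real.pi))⁻¹ * c) * (x^2+1) * Real.exp (-(1/8) * x^2) := by
            gcongr
        _ = ((Real.sqrt (2*Real.pi))⁻¹ * c + ((Real.sqrt (2*Real.pi))⁻¹ * c) * x^2 + 0 * x^4)
              * Real.exp (-(1/8) * x^2) := by ring
  -- change of variables
  have hCOV : ∀ t : ℝ, 0 < t →
      ∫ g, (g^2-1)*σ (t*g) ∂(gaussianReal 0 1)
        = (Real.sqrt (2*Real.pi))⁻¹ * ∫ u, σ u * stmt3Kf u t⁻¹ := by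
    intro t ht
    have ht' : t ≠ 0 := ht.ne'
    rw [stmt3_integral_gauss_eq]
    have key : ∀ x : ℝ, ((Real.sqrt (2*Real.pi))⁻¹ * Real.exp (-x^2/2)) * ((x^2-1)*σ (t*x))
        = ((Real.sqrt (2*Real.pi))⁻¹ * t) * ((fun u => σ u * stmt3Kf u t⁻¹) (t*x)) := by
      intro x
      have hx : t*x*t⁻¹ = x := by field_simp
      simp only [stmt3Kf, hx]
      field_simp
    calc ∫ x, ((Real.sqrt (2*Real.pi))⁻¹ * Real.exp (-x^2/2)) * ((x^2-1)*σ (t*x))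
        = ∫ x, ((Real.sqrt (2*Real.pi))⁻¹ * t) * ((fun u => σ u * stmt3Kf u t⁻¹) (t*x)) := by
          simp_rw [key]
      _ = ((Real.sqrt (2*Real.pi))⁻¹ * t) * ∫ x, (fun u => σ u * stmt3Kf u t⁻¹) (t*x) :=
          integral_const_mul _ _
      _ = ((Real.sqrt (2*Real.pi))⁻¹ * t) * (|t⁻¹| • ∫ u, σ u * stmt3Kf u t⁻¹) := by
          rw [Measure.integral_comp_mul_left (fun u => σ u * stmt3Kf u t⁻¹) t]
      _ = (Real.sqrt (2*Real.pi))⁻¹ * ∫ u, σ u * stmt3Kf u t⁻¹ := by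
          rw [smul_eq_mul, abs_of_pos (inv_pos.mpr ht)]
          field_simp
  -- differentiation under the integral sign
  have hmeasK : ∀ t : ℝ, AEStronglyMeasurable (fun u => σ u * stmt3Kf u t⁻¹) volume := by
    intro t
    apply Measurable.aestronglyMeasurable
    apply hσm.mul
    unfold stmt3Kf
    fun_prop
  have hderiv : HasDerivAt (fun t : ℝ => ∫ u, σ u * stmt3Kf u t⁻¹)
      (∫ u, σ u * (stmt3Kd u (1:ℝ)⁻¹ * (-((1:ℝ)^2)⁻¹))) 1 := by
    refine (hasDerivAt_integral_of_dominated_loc_of_deriv_le (μ := volume)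
      (F := fun t u => σ u * stmt3Kf u t⁻¹)
      (F' := fun t u => σ u * (stmt3Kd u t⁻¹ * (-(t^2)⁻¹))) (x₀ := (1:ℝ))
      (bound := fun u => (4*c) * ((1 + 16*u^2 + 16*u^4) * Real.exp (-(1/18) * u^2)))
      (Metric.ball_mem_nhds (1:ℝ) hε) (Filter.Eventually.of_forall hmeasK) ?_ ?_ ?_ ?_ ?_).2
    · -- integrability at t = 1
      refine stmt3_integrable_of_le_polyGauss (a := c) (b := c) (c := 0) (d := 1/4)
        (hmeasK 1) (by norm_num) ?_
      intro u
      have hK1 : stmt3Kf u (1:ℝ)⁻¹ = (u^2 - 1) * Real.exp (-u^2/2) := by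
        simp [stmt3Kf]
      show |σ u * stmt3Kf u (1:ℝ)⁻¹| ≤ (c + c * u^2 + 0 * u^4) * Real.exp (-(1/4) * u^2)
      rw [hK1, abs_mul, abs_mul, Real.abs_exp]
      have habs2 : |u^2 - 1| ≤ u^2 + 1 := abs_le.mpr ⟨by nlinarith [sq_nonneg u], by nlinarith⟩
      calc |σ u| * (|u^2-1| * Real.exp (-u^2/2))
          ≤ (c * Real.exp (m*u^2/4)) * ((u^2+1) * Real.exp (-u^2/2)) := by
            gcongr
            exact hσabs u
        _ = (c * (u^2+1)) * (Real.exp (m*u^2/4) * Real.exp (-u^2/2)) := by ring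
        _ ≤ (c * (u^2+1)) * Real.exp (-(1/4) * u^2) := by
            gcongr
            rw [← Real.exp_add]
            apply Real.exp_le_exp.mpr
            nlinarith [sq_nonneg u]
        _ = (c + c * u^2 + 0 * u^4) * Real.exp (-(1/4) * u^2) := by ring
    · -- measurability of F' at 1
      apply Measurable.aestronglyMeasurable
      apply hσm.mul
      unfold stmt3Kd
      fun_prop
    · -- the uniform bound
      refine Filter.Eventually.of_forall (fun u => ?_)
      intro t htb
      obtain ⟨ht12, htm⟩ := hball t htb
      have ht0 : (0:ℝ) < t := lt_trans (by norm_num) ht12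
      have htiv : t * t⁻¹ = 1 := mul_inv_cancel₀ ht0.ne'
      have htinvpos : (0:ℝ) < t⁻¹ := inv_pos.mpr ht0
      have hs1 : m < t⁻¹ := by nlinarith
      have hs2 : t⁻¹ < 2 := by nlinarith
      have ht2inv : (t^2)⁻¹ ≤ 4 := by
        have h1 : (0:ℝ) < t^2 := by positivity
        have h2 : t^2 * (t^2)⁻¹ = 1 := mul_inv_cancel₀ h1.ne'
        nlinarith [inv_pos.mpr h1]
      have hs4 : (t⁻¹)^2 ≤ 4 := by nlinarith
      have hs16 : (t⁻¹)^4 ≤ 16 := by nlinarith [sq_nonneg (t⁻¹)]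
      have hpoly : |3*u^2*(t⁻¹)^2 - 1 - (u^2*(t⁻¹)^3 - t⁻¹)*(u^2*t⁻¹)| ≤ 16*u^4 + 16*u^2 + 1 := by
        rw [abs_le]
        constructor
        · nlinarith [sq_nonneg (u*t⁻¹), sq_nonneg (u^2*(t⁻¹)^2), sq_nonneg u,
            mul_le_mul_of_nonneg_left hs4 (sq_nonneg u),
            mul_le_mul_of_nonneg_left hs16 (sq_nonneg (u^2))]
        · nlinarith [sq_nonneg (u*t⁻¹), sq_nonneg (u^2*(t⁻¹)^2), sq_nonneg u,
            mul_le_mul_of_nonneg_left hs4 (sq_nonneg u),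
            mul_le_mul_of_nonneg_left hs16 (sq_nonneg (u^2))]
      have hexp : Real.exp (-(u*t⁻¹)^2/2) ≤ Real.exp (-(m^2/2) * u^2) := by
        apply Real.exp_le_exp.mpr
        nlinarith [sq_nonneg u, mul_le_mul_of_nonneg_left (mul_le_mul hs1.le hs1.le hm0.le htinvpos.le) (sq_nonneg u)]
      have hnorm : ‖σ u * (stmt3Kd u t⁻¹ * (-(t^2)⁻¹))‖
          = |σ u| * ((|3*u^2*(t⁻¹)^2 - 1 - (u^2*(t⁻¹)^3 - t⁻¹)*(u^2*t⁻¹)|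
              * Real.exp (-(u*t⁻¹)^2/2)) * (t^2)⁻¹) := by
        rw [Real.norm_eq_abs, abs_mul, abs_mul, abs_neg, abs_inv]
        rw [abs_of_nonneg (sq_nonneg t)]
        congr 2
        rw [stmt3Kd, abs_mul, Real.abs_exp]
      rw [hnorm]
      calc |σ u| * ((|3*u^2*(t⁻¹)^2 - 1 - (u^2*(t⁻¹)^3 - t⁻¹)*(u^2*t⁻¹)|
              * Real.exp (-(u*t⁻¹)^2/2)) * (t^2)⁻¹)
          ≤ (c * Real.exp (m*u^2/4)) * (((16*u^4 + 16*u^2 + 1)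
              * Real.exp (-(m^2/2) * u^2)) * 4) := by
            gcongr
            exact hσabs u
        _ = (4*c) * ((16*u^4 + 16*u^2 + 1) * (Real.exp (m*u^2/4) * Real.exp (-(m^2/2) * u^2))) := by
            ring
        _ ≤ (4*c) * ((1 + 16*u^2 + 16*u^4) * Real.exp (-(1/18) * u^2)) := by
            have hexp2 : Real.exp (m*u^2/4) * Real.exp (-(m^2/2) * u^2)
                ≤ Real.exp (-(1/18) * u^2) := by
              rw [← Real.exp_add]
              apply Real.exp_le_exp.mpr
              have key : 0 ≤ (3*m - 2) * (6*m + 1) := by nlinarith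
              nlinarith [mul_nonneg key (sq_nonneg u)]
            have h1 : (16*u^4 + 16*u^2 + 1) * (Real.exp (m*u^2/4) * Real.exp (-(m^2/2) * u^2))
                ≤ (1 + 16*u^2 + 16*u^4) * Real.exp (-(1/18) * u^2) := by
              calc (16*u^4 + 16*u^2 + 1) * (Real.exp (m*u^2/4) * Real.exp (-(m^2/2) * u^2))
                  ≤ (16*u^4 + 16*u^2 + 1) * Real.exp (-(1/18) * u^2) :=
                    mul_le_mul_of_nonneg_left hexp2 (by positivity)
                _ = (1 + 16*u^2 + 16*u^4) * Real.exp (-(1/18) * u^2) := by ring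
            exact mul_le_mul_of_nonneg_left h1 (by positivity)
    · exact (stmt3_integrable_polyGauss 1 16 16 (by norm_num : (0:ℝ) < 1/18)).const_mul (4*c)
    · -- differentiability
      refine Filter.Eventually.of_forall (fun u => ?_)
      intro t htb
      have ht0 : (0:ℝ) < t := lt_trans (by norm_num) (hball t htb).1
      exact (stmt3_hasDerivAt_Kinv u t ht0.ne').const_mul (σ u)
  -- identify the derivative value
  have hval : (fun u => σ u * (stmt3Kd u (1:ℝ)⁻¹ * (-((1:ℝ)^2)⁻¹)))
      = fun u => σ u * ((u^4 - 4*u^2 + 1) * Real.exp (-u^2/2)) := by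
    funext u
    simp only [stmt3Kd, inv_one, one_pow, mul_one]
    ring
  have hJ4int : Integrable (fun u => σ u * ((u^4 - 6*u^2 + 3) * Real.exp (-u^2/2))) volume := by
    refine stmt3_integrable_of_le_polyGauss (a := 3*c) (b := 6*c) (c := c) (d := 1/4)
      ?_ (by norm_num) ?_
    · exact (hσm.mul (by fun_prop)).aestronglyMeasurable
    · intro u
      rw [abs_mul, abs_mul, Real.abs_exp]
      have habs : |u^4 - 6*u^2 + 3| ≤ u^4 + 6*u^2 + 3 := abs_le.mpr
        ⟨by nlinarith [sq_nonneg u, sq_nonneg (u^2)], by nlinarith [sq_nonneg u]⟩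
      calc |σ u| * (|u^4 - 6*u^2 + 3| * Real.exp (-u^2/2))
          ≤ (c * Real.exp (m*u^2/4)) * ((u^4 + 6*u^2 + 3) * Real.exp (-u^2/2)) := by
            gcongr
            exact hσabs u
        _ = (c * (u^4 + 6*u^2 + 3)) * (Real.exp (m*u^2/4) * Real.exp (-u^2/2)) := by ring
        _ ≤ (c * (u^4 + 6*u^2 + 3)) * Real.exp (-(1/4) * u^2) := by
            gcongr
            rw [← Real.exp_add]
            apply Real.exp_le_exp.mpr
            nlinarith [sq_nonneg u]
        _ = (3*c + 6*c*u^2 + c*u^4) * Real.exp (-(1/4) * u^2) := by ring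
  have hJ2int : Integrable (fun u => σ u * ((u^2 - 1) * Real.exp (-u^2/2))) volume := by
    refine stmt3_integrable_of_le_polyGauss (a := c) (b := c) (c := 0) (d := 1/4)
      ?_ (by norm_num) ?_
    · exact (hσm.mul (by fun_prop)).aestronglyMeasurable
    · intro u
      rw [abs_mul, abs_mul, Real.abs_exp]
      have habs : |u^2 - 1| ≤ u^2 + 1 := abs_le.mpr ⟨by nlinarith [sq_nonneg u], by nlinarith⟩
      calc |σ u| * (|u^2 - 1| * Real.exp (-u^2/2))
          ≤ (c * Real.exp (m*u^2/4)) * ((u^2 + 1) * Real.exp (-u^2/2)) := by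
            gcongr
            exact hσabs u
        _ = (c * (u^2 + 1)) * (Real.exp (m*u^2/4) * Real.exp (-u^2/2)) := by ring
        _ ≤ (c * (u^2 + 1)) * Real.exp (-(1/4) * u^2) := by
            gcongr
            rw [← Real.exp_add]
            apply Real.exp_le_exp.mpr
            nlinarith [sq_nonneg u]
        _ = (c + c*u^2 + 0*u^4) * Real.exp (-(1/4) * u^2) := by ring
  have hsum : (∫ u, σ u * ((u^4 - 4*u^2 + 1) * Real.exp (-u^2/2)))
      = (∫ u, σ u * ((u^4 - 6*u^2 + 3) * Real.exp (-u^2/2)))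
        + 2 * ∫ u, σ u * ((u^2 - 1) * Real.exp (-u^2/2)) := by
    rw [← integral_const_mul, ← integral_add hJ4int (hJ2int.const_mul 2)]
    congr 1
    funext u
    ring
  have hder2 : HasDerivAt (fun t : ℝ => ∫ u, σ u * stmt3Kf u t⁻¹)
      ((∫ u, σ u * ((u^4 - 6*u^2 + 3) * Real.exp (-u^2/2)))
        + 2 * ∫ u, σ u * ((u^2 - 1) * Real.exp (-u^2/2))) 1 := by
    rw [← hsum, ← show (∫ u, σ u * (stmt3Kd u (1:ℝ)⁻¹ * (-((1:ℝ)^2)⁻¹)))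
      = ∫ u, σ u * ((u^4 - 4*u^2 + 1) * Real.exp (-u^2/2)) from by rw [hval]]
    exact hderiv
  have hT := (hasDerivAt_iff_tendsto_slope.mp hder2).const_mul (Real.sqrt (2*Real.pi))⁻¹
  -- identify the target value
  have htarget : (∫ g, σ g * (g ^ 4 - 6 * g ^ 2 + 3) ∂(gaussianReal 0 1))
        + 2 * ∫ g, σ g * (g ^ 2 - 1) ∂(gaussianReal 0 1)
      = (Real.sqrt (2*Real.pi))⁻¹ * ((∫ u, σ u * ((u^4 - 6*u^2 + 3) * Real.exp (-u^2/2)))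
        + 2 * ∫ u, σ u * ((u^2 - 1) * Real.exp (-u^2/2))) := by
    rw [stmt3_integral_gauss_eq, stmt3_integral_gauss_eq]
    have e4 : ∫ x, ((Real.sqrt (2*Real.pi))⁻¹ * Real.exp (-x^2/2)) * (σ x * (x^4 - 6*x^2 + 3))
        = (Real.sqrt (2*Real.pi))⁻¹ * ∫ u, σ u * ((u^4 - 6*u^2 + 3) * Real.exp (-u^2/2)) := by
      rw [← integral_const_mul]
      congr 1
      funext x
      ring
    have e2 : ∫ x, ((Real.sqrt (2*Real.pi))⁻¹ * Real.exp (-x^2/2)) * (σ x * (x^2 - 1))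
        = (Real.sqrt (2*Real.pi))⁻¹ * ∫ u, σ u * ((u^2 - 1) * Real.exp (-u^2/2)) := by
      rw [← integral_const_mul]
      congr 1
      funext x
      ring
    rw [e4, e2]
    ring
  rw [htarget]
  -- eventual equality of the two difference quotients
  apply Filter.Tendsto.congr' _ hT
  have hball' : ∀ᶠ t in nhdsWithin (1:ℝ) {(1:ℝ)}ᶜ, t ∈ Metric.ball (1:ℝ) ε := by
    have h1 : ∀ᶠ t in nhds (1:ℝ), t ∈ Metric.ball (1:ℝ) ε := by
      filter_upwards [Metric.ball_mem_nhds (1:ℝ) hε] with t ht using ht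
    exact h1.filter_mono nhdsWithin_le_nhds
  filter_upwards [hball', self_mem_nhdsWithin] with t htb htne
  obtain ⟨ht12, htm⟩ := hball t htb
  have ht0 : (0:ℝ) < t := lt_trans (by norm_num) ht12
  have hsub : ∫ g, (g^2 - 1) * (σ (t*g) - σ g) ∂(gaussianReal 0 1)
      = (∫ g, (g^2-1)*σ (t*g) ∂(gaussianReal 0 1))
        - ∫ g, (g^2-1)*σ (1*g) ∂(gaussianReal 0 1) := by
    rw [← integral_sub (hIntγ t ht0 htm) (hIntγ 1 one_pos hminv)]
    congr 1
    funext g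
    simp only [one_mul]
    ring
  show (Real.sqrt (2*Real.pi))⁻¹
      * slope (fun t : ℝ => ∫ u, σ u * stmt3Kf u t⁻¹) 1 t
    = (∫ g, (g^2 - 1) * (σ (t*g) - σ g) ∂(gaussianReal 0 1)) / (t - 1)
  rw [hsub, hCOV t ht0, hCOV 1 one_pos, slope_def_field]
  ring
end

section
/- Fix a symmetric matrix Δ ∈ ℝ^{d×d} and a matrix P₁ ∈ ℝ^{d×N} with orthonormal columns, N < d. Then max over G ∈ ℝ^{N×d} of Tr(P₁GΔ) subject to ‖P₁G + GᵀP₁ᵀ‖_F² ≤ 1 equals (1/2)√(‖Δ‖_F² − ‖P₂ᵀΔP₂‖_F²), where P₂ ∈ ℝ^{d×(d−N)} completes P₁ to an orthonormal basis. Equivalently, max_G ⟨P₁G + GᵀP₁ᵀ, Δ⟩²/‖P₁G + GᵀP₁ᵀ‖_F² = ‖Δ‖_F² − ‖P₂ᵀΔP₂‖_F². -/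
open Matrix

/-- Squared Frobenius norm of a matrix. -/
def frobSq {m n : Type*} [Fintype m] [Fintype n] (M : Matrix m n ℝ) : ℝ :=
  ∑ i, ∑ j, (M i j) ^ 2

lemma frobSq_eq_trace {m n : Type*} [Fintype m] [Fintype n] (M : Matrix m n ℝ) :
    frobSq M = (Mᵀ * M).trace := by
  simp only [frobSq, trace, Matrix.mul_apply, Matrix.diag, transpose_apply, sq]
  rw [Finset.sum_comm]

lemma frobSq_nonneg {m n : Type*} [Fintype m] [Fintype n] (M : Matrix m n ℝ) :
    0 ≤ frobSq M := by
  unfold frobSq; positivity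

lemma frobSq_smul {m n : Type*} [Fintype m] [Fintype n] (c : ℝ) (M : Matrix m n ℝ) :
    frobSq (c • M) = c^2 * frobSq M := by
  simp [frobSq, Finset.mul_sum, mul_pow]

lemma cs_trace {n m : Type*} [Fintype n] [Fintype m] (X Y : Matrix m n ℝ) :
    ((Xᵀ * Y).trace)^2 ≤ frobSq X * frobSq Y := by
  have h : (Xᵀ * Y).trace = ∑ p : m × n, X p.1 p.2 * Y p.1 p.2 := by
    rw [Fintype.sum_prod_type]
    simp only [trace, Matrix.mul_apply, Matrix.diag, transpose_apply]
    rw [Finset.sum_comm]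
  have hX : frobSq X = ∑ p : m × n, X p.1 p.2 ^ 2 := by
    rw [frobSq, Fintype.sum_prod_type]
  have hY : frobSq Y = ∑ p : m × n, Y p.1 p.2 ^ 2 := by
    rw [frobSq, Fintype.sum_prod_type]
  rw [h, hX, hY]
  have := Finset.sum_mul_sq_le_sq_mul_sq Finset.univ (fun p : m × n => X p.1 p.2) (fun p => Y p.1 p.2)
  simpa [sq] using this

/-- for symmetric `Δ` and `P₁` with orthonormal columns completed
by `P₂`, the maximum of `Tr(P₁GΔ)` over `‖P₁G + GᵀP₁ᵀ‖_F² ≤ 1` equals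
`(1/2)√(‖Δ‖_F² - ‖P₂ᵀΔP₂‖_F²)`. -/
theorem stmt_11 (d N : ℕ) (hN : N < d)
    (Δ : Matrix (Fin d) (Fin d) ℝ) (hΔ : Δ.IsSymm)
    (P₁ : Matrix (Fin d) (Fin N) ℝ) (P₂ : Matrix (Fin d) (Fin (d - N)) ℝ)
    (hP₁ : P₁ᵀ * P₁ = 1) (hP₂ : P₂ᵀ * P₂ = 1)
    (hcomp : P₁ * P₁ᵀ + P₂ * P₂ᵀ = 1) :
    IsGreatest {y : ℝ | ∃ G : Matrix (Fin N) (Fin d) ℝ,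
        frobSq (P₁ * G + Gᵀ * P₁ᵀ) ≤ 1 ∧ y = (P₁ * G * Δ).trace}
      ((1 / 2) * Real.sqrt (frobSq Δ - frobSq (P₂ᵀ * Δ * P₂))) := by
  have hΔt : Δᵀ = Δ := hΔ
  set E : Matrix (Fin d) (Fin d) ℝ := P₁ * P₁ᵀ with hEdef
  have hEP₁ : E * P₁ = P₁ := by
    rw [hEdef, Matrix.mul_assoc, hP₁, Matrix.mul_one]
  have hP₁E : P₁ᵀ * E = P₁ᵀ := by
    rw [hEdef, ← Matrix.mul_assoc, hP₁, Matrix.one_mul]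
  have hEt : Eᵀ = E := by rw [hEdef, transpose_mul, transpose_transpose]
  set K : Matrix (Fin d) (Fin d) ℝ := 1 - E with hKdef
  have hF : P₂ * P₂ᵀ = K := by rw [hKdef, eq_sub_iff_add_eq, add_comm]; exact hcomp
  have hKt : Kᵀ = K := by rw [hKdef, transpose_sub, transpose_one, hEt]
  have hKP₁ : K * P₁ = 0 := by
    rw [hKdef, Matrix.sub_mul, Matrix.one_mul, hEP₁, sub_self]
  have hP₁K : P₁ᵀ * K = 0 := by
    rw [hKdef, Matrix.mul_sub, Matrix.mul_one, hP₁E, sub_self]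
  have hEE : E * E = E := by
    rw [hEdef, Matrix.mul_assoc, ← Matrix.mul_assoc P₁ᵀ, hP₁, Matrix.one_mul]
  have hKK : K * K = K := by
    rw [hKdef]
    have : (1 - E) * (1 - E) = 1 - E - (E - E * E) := by noncomm_ring
    rw [this, hEE, sub_self, sub_zero]
  set D : Matrix (Fin d) (Fin d) ℝ := Δ - K * Δ * K with hDdef
  have hDt : Dᵀ = D := by
    rw [hDdef, transpose_sub, transpose_mul, transpose_mul, hKt, hΔt, Matrix.mul_assoc]
  have hKDK : K * D * K = 0 := by
    have h1 : K * D * K = K * Δ * K - (K * K) * Δ * (K * K) := by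
      rw [hDdef]; noncomm_ring
    rw [h1, hKK, sub_self]
  have cyc : ∀ X : Matrix (Fin d) (Fin d) ℝ,
      (X * (K * Δ * K)).trace = ((K * X * K) * Δ).trace := by
    intro X
    rw [show X * (K * Δ * K) = (X * K * Δ) * K by noncomm_ring, trace_mul_comm,
        show K * (X * K * Δ) = (K * X * K) * Δ by noncomm_ring]
  have key : ∀ X : Matrix (Fin d) (Fin d) ℝ, K * X * K = 0 →
      (X * D).trace = (X * Δ).trace := by
    intro X hX
    rw [hDdef, Matrix.mul_sub, trace_sub, cyc, hX, Matrix.zero_mul, trace_zero, sub_zero]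
  have hQ : frobSq (P₂ᵀ * Δ * P₂) = ((K * Δ * K) * Δ).trace := by
    rw [frobSq_eq_trace]
    have ht : (P₂ᵀ * Δ * P₂)ᵀ = P₂ᵀ * Δ * P₂ := by
      rw [transpose_mul, transpose_mul, hΔt, transpose_transpose, Matrix.mul_assoc]
    rw [ht]
    have h1 : (P₂ᵀ * Δ * P₂) * (P₂ᵀ * Δ * P₂) = P₂ᵀ * (Δ * (P₂ * (P₂ᵀ * (Δ * P₂)))) := by
      simp only [Matrix.mul_assoc]
    rw [h1, trace_mul_comm]
    have h2 : Δ * (P₂ * (P₂ᵀ * (Δ * P₂))) * P₂ᵀ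
        = Δ * ((P₂ * P₂ᵀ) * (Δ * (P₂ * P₂ᵀ))) := by
      simp only [Matrix.mul_assoc]
    rw [h2, hF, trace_mul_comm]
    congr 1
    noncomm_ring
  have hfΔ : frobSq Δ = (Δ * Δ).trace := by rw [frobSq_eq_trace, hΔt]
  set M : ℝ := frobSq Δ - frobSq (P₂ᵀ * Δ * P₂) with hMdef
  have hDΔ : (D * Δ).trace = M := by
    rw [hDdef, Matrix.sub_mul, trace_sub, hMdef, hfΔ, hQ]
  have hDD : frobSq D = M := by
    rw [frobSq_eq_trace, hDt, key D hKDK, hDΔ]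
  have hM0 : 0 ≤ M := hDD ▸ frobSq_nonneg D
  have obj : ∀ G : Matrix (Fin N) (Fin d) ℝ,
      ((P₁ * G + Gᵀ * P₁ᵀ) * D).trace = 2 * (P₁ * G * Δ).trace := by
    intro G
    have hA : K * (P₁ * G) * K = 0 := by
      rw [← Matrix.mul_assoc, hKP₁, Matrix.zero_mul, Matrix.zero_mul]
    have hB : K * (Gᵀ * P₁ᵀ) * K = 0 := by
      rw [← Matrix.mul_assoc K Gᵀ P₁ᵀ, Matrix.mul_assoc (K * Gᵀ) P₁ᵀ K, hP₁K,
        Matrix.mul_zero]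
    have hKSK : K * (P₁ * G + Gᵀ * P₁ᵀ) * K = 0 := by
      rw [Matrix.mul_add, Matrix.add_mul, hA, hB, add_zero]
    rw [key _ hKSK, Matrix.add_mul, trace_add]
    have h2 : ((Gᵀ * P₁ᵀ) * Δ).trace = (P₁ * G * Δ).trace := by
      have h3 : (Gᵀ * P₁ᵀ) * Δ = ((Δ * (P₁ * G)))ᵀ := by
        simp [transpose_mul, hΔt, Matrix.mul_assoc]
      rw [h3, trace_transpose, trace_mul_comm, Matrix.mul_assoc]
    rw [h2]; ring
  constructor
  · -- membership
    by_cases hM : M = 0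
    · refine ⟨0, by simp [frobSq], ?_⟩
      rw [hM]; simp
    · have hMpos : 0 < M := lt_of_le_of_ne hM0 (Ne.symm hM)
      have hsq : (0:ℝ) < Real.sqrt M := Real.sqrt_pos.mpr hMpos
      set c : ℝ := (Real.sqrt M)⁻¹ with hcdef
      set G₀ : Matrix (Fin N) (Fin d) ℝ :=
        c • (P₁ᵀ * Δ - (2:ℝ)⁻¹ • (P₁ᵀ * (Δ * E))) with hG₀def
      have hSform : P₁ * G₀ + G₀ᵀ * P₁ᵀ = c • D := by
        rw [hG₀def, hDdef]
        simp only [transpose_smul, transpose_sub, transpose_mul, transpose_transpose,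
          transpose_smul, hΔt, hEt, Matrix.mul_smul, Matrix.smul_mul, ← smul_add]
        congr 1
        simp only [Matrix.mul_sub, Matrix.sub_mul, Matrix.mul_smul, Matrix.smul_mul]
        have e1 : P₁ * (P₁ᵀ * Δ) = E * Δ := by rw [hEdef, Matrix.mul_assoc]
        have e2 : P₁ * (P₁ᵀ * (Δ * E)) = E * Δ * E := by
          rw [hEdef, Matrix.mul_assoc, Matrix.mul_assoc]
        have e3 : Δ * P₁ * P₁ᵀ = Δ * E := by rw [hEdef, Matrix.mul_assoc]
        have e4 : E * Δ * P₁ * P₁ᵀ = E * Δ * E := by rw [hEdef, Matrix.mul_assoc (E * Δ)]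
        rw [e1, e2, e3, e4, hKdef]
        have h5 : Δ - (1 - E) * Δ * (1 - E) = E * Δ + Δ * E - E * Δ * E := by noncomm_ring
        rw [h5]
        module
      have hval : 2 * (P₁ * G₀ * Δ).trace = c * M := by
        rw [← obj G₀, hSform, Matrix.smul_mul, trace_smul, smul_eq_mul]
        congr 1
        nth_rewrite 1 [← hDt]
        rw [← frobSq_eq_trace, hDD]
      refine ⟨G₀, ?_, ?_⟩
      · rw [hSform, frobSq_smul, hDD]
        have : ((Real.sqrt M)⁻¹)^2 * M = 1 := by
          rw [← Real.sq_sqrt hM0]; field_simp; rw [Real.sqrt_sq (Real.sqrt_nonneg M)]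
        rw [hcdef, this]
      · have hcM : c * M = Real.sqrt M := by
          rw [hcdef, inv_mul_eq_div, div_eq_iff (ne_of_gt hsq), Real.mul_self_sqrt hM0]
        linarith [hval, hcM]
  · -- upper bound
    rintro y ⟨G, hG, rfl⟩
    set S : Matrix (Fin d) (Fin d) ℝ := P₁ * G + Gᵀ * P₁ᵀ with hSdef
    have hSt : Sᵀ = S := by
      rw [hSdef, transpose_add, transpose_mul, transpose_mul, transpose_transpose,
        transpose_transpose, add_comm]
    have hcs : ((Sᵀ * D).trace)^2 ≤ frobSq S * frobSq D := cs_trace S D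
    rw [hSt, hSdef] at hcs
    rw [obj G] at hcs
    have h8 : (2 * (P₁ * G * Δ).trace)^2 ≤ M := by
      calc (2 * (P₁ * G * Δ).trace)^2 ≤ frobSq S * frobSq D := hcs
        _ ≤ 1 * M := by
            rw [hDD]
            exact mul_le_mul_of_nonneg_right hG hM0
        _ = M := one_mul M
    have h9 : 2 * (P₁ * G * Δ).trace ≤ Real.sqrt M := by
      calc 2 * (P₁ * G * Δ).trace ≤ |2 * (P₁ * G * Δ).trace| := le_abs_self _
        _ = Real.sqrt ((2 * (P₁ * G * Δ).trace)^2) := (Real.sqrt_sq_eq_abs _).symm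
        _ ≤ Real.sqrt M := Real.sqrt_le_sqrt h8
    linarith
end

section
/- Let L(W, c) = E_{x∼N(0,I_d)}[(⟨xxᵀ, B − WWᵀ⟩ + b₀ − c)²] with B ⪰ 0 symmetric. At any critical point (W₀, c₀) of L, the matrix Γ₀ = W₀W₀ᵀ satisfies BW₀ = W₀W₀ᵀW₀ and c₀ = b₀ + Tr(B − Γ₀); consequently (after diagonalizing B) there exists a set of eigenvectors of B with positive eigenvalues such that Γ₀ = PBP for the associated orthogonal projection P. -/
open MeasureTheory ProbabilityTheory Matrix

/-- The standard Gaussian measure `N(0, I_d)` on `ℝᵈ`. -/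
noncomputable def stdGaussian (d : ℕ) : Measure (Fin d → ℝ) :=
  Measure.pi (fun _ => gaussianReal 0 1)

section Aux
open Real
open scoped ENNReal NNReal

noncomputable def gmom (n : ℕ) : ℝ := ∫ x : ℝ, x ^ n * Real.exp (-x ^ 2 / 2)

lemma integrable_pow_gauss (n : ℕ) :
    Integrable (fun x : ℝ => x ^ n * Real.exp (-x ^ 2 / 2)) := by
  have h := integrable_rpow_mul_exp_neg_mul_sq (b := (1:ℝ)/2) (by norm_num)
    (s := (n : ℝ)) (by exact lt_of_lt_of_le (by norm_num) (Nat.cast_nonneg n))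
  convert h using 2 with x
  rw [Real.rpow_natCast]
  ring_nf

lemma gmom_zero : gmom 0 = Real.sqrt (2 * π) := by
  have h := integral_gaussian (1/2)
  simp only [gmom, pow_zero, one_mul]
  rw [show (fun x : ℝ => Real.exp (-x^2/2)) = fun x : ℝ => Real.exp (-(1/2) * x^2) by
    funext x; ring_nf]
  rw [h]; rw [show π/((1:ℝ)/2) = 2*π by ring]

lemma gmom_rec (n : ℕ) : gmom (n + 2) = (n + 1) * gmom n := by
  have hu : ∀ x : ℝ, HasDerivAt (fun y : ℝ => y ^ (n+1)) ((n+1) * x ^ n) x := by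
    intro x
    simpa using (hasDerivAt_pow (n+1) x)
  have hv : ∀ x : ℝ, HasDerivAt (fun y : ℝ => -Real.exp (-y^2/2)) (x * Real.exp (-x^2/2)) x := by
    intro x
    have h1 : HasDerivAt (fun y : ℝ => -y^2/2) (-x) x := by
      have := ((hasDerivAt_pow 2 x).neg).div_const 2
      simpa using this.congr_deriv (by push_cast; ring)
    have := (h1.exp).neg
    exact this.congr_deriv (by ring)
  have key := integral_mul_deriv_eq_deriv_mul_of_integrable
    (u := fun y : ℝ => y ^ (n+1)) (u' := fun y : ℝ => (n+1) * y ^ n)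
    (v := fun y : ℝ => -Real.exp (-y^2/2)) (v' := fun y : ℝ => y * Real.exp (-y^2/2))
    (fun x _ => hu x) (fun x _ => hv x) ?_ ?_ ?_
  · have h1 : (∫ x : ℝ, x ^ (n+1) * (x * Real.exp (-x^2/2))) = gmom (n+2) := by
      unfold gmom; congr 1; funext x; ring
    have h2 : (∫ x : ℝ, ((n:ℝ)+1) * x ^ n * -Real.exp (-x^2/2)) = -((n+1) * gmom n) := by
      rw [show (fun x : ℝ => ((n:ℝ)+1) * x ^ n * -Real.exp (-x^2/2))
          = fun x : ℝ => (-((n:ℝ)+1)) * (x ^ n * Real.exp (-x^2/2)) by funext x; ring]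
      rw [integral_const_mul]; unfold gmom; ring
    rw [h1, h2] at key
    linarith [key]
  · have := (integrable_pow_gauss (n+2)).const_mul (1:ℝ)
    apply Integrable.congr (integrable_pow_gauss (n+2))
    filter_upwards with x
    show x^(n+2) * Real.exp (-x^2/2) = _
    simp only [Pi.mul_apply]; ring
  · apply Integrable.congr ((integrable_pow_gauss n).const_mul (-((n:ℝ)+1)))
    filter_upwards with x
    show -((n:ℝ)+1) * (x^n * Real.exp (-x^2/2)) = _
    simp only [Pi.mul_apply]; ring
  · apply Integrable.congr ((integrable_pow_gauss (n+1)).const_mul (-1))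
    filter_upwards with x
    show -1 * (x^(n+1) * Real.exp (-x^2/2)) = _
    simp only [Pi.mul_apply]; ring

lemma gmom_one : gmom 1 = 0 := by
  have hv : ∀ x : ℝ, HasDerivAt (fun y : ℝ => -Real.exp (-y^2/2)) (x * Real.exp (-x^2/2)) x := by
    intro x
    have h1 : HasDerivAt (fun y : ℝ => -y^2/2) (-x) x := by
      have := ((hasDerivAt_pow 2 x).neg).div_const 2
      simpa using this.congr_deriv (by push_cast; ring)
    have := (h1.exp).neg
    exact this.congr_deriv (by ring)
  have key := integral_mul_deriv_eq_deriv_mul_of_integrable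
    (u := fun _ : ℝ => (1:ℝ)) (u' := fun _ : ℝ => (0:ℝ))
    (v := fun y : ℝ => -Real.exp (-y^2/2)) (v' := fun y : ℝ => y * Real.exp (-y^2/2))
    (fun x _ => hasDerivAt_const x (1:ℝ)) (fun x _ => hv x) ?_ ?_ ?_
  · have h1 : (∫ x : ℝ, (1:ℝ) * (x * Real.exp (-x^2/2))) = gmom 1 := by
      unfold gmom; congr 1; funext x; ring
    rw [h1] at key
    simpa using key
  · apply Integrable.congr (integrable_pow_gauss 1)
    filter_upwards with x
    show x^1 * Real.exp (-x^2/2) = _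
    simp only [Pi.mul_apply]; ring
  · apply Integrable.congr ((integrable_pow_gauss 0).const_mul 0)
    filter_upwards with x
    show (0:ℝ) * (x^0 * Real.exp (-x^2/2)) = _
    simp only [Pi.mul_apply]; ring
  · apply Integrable.congr ((integrable_pow_gauss 0).const_mul (-1))
    filter_upwards with x
    show (-1:ℝ) * (x^0 * Real.exp (-x^2/2)) = _
    simp only [Pi.mul_apply]; ring

lemma gmom_two : gmom 2 = Real.sqrt (2 * π) := by
  have := gmom_rec 0; rw [gmom_zero] at this; simpa using this

lemma gmom_three : gmom 3 = 0 := by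
  have := gmom_rec 1; rw [gmom_one] at this; simpa using this

lemma gmom_four : gmom 4 = 3 * Real.sqrt (2 * π) := by
  have := gmom_rec 2; rw [gmom_two] at this
  rw [show (4:ℕ) = 2+2 by rfl, this]; norm_num

lemma gaussianPDFReal_zero_one (x : ℝ) :
    gaussianPDFReal 0 1 x = (Real.sqrt (2 * π))⁻¹ * Real.exp (-x ^ 2 / 2) := by
  simp [gaussianPDFReal]

lemma integral_g1 (f : ℝ → ℝ) :
    ∫ x, f x ∂(gaussianReal 0 1) = ∫ x, gaussianPDFReal 0 1 x * f x := by
  rw [gaussianReal_of_var_ne_zero 0 one_ne_zero]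
  rw [show gaussianPDF 0 1 = fun x => ((gaussianPDFReal 0 1 x).toNNReal : ℝ≥0∞) from rfl]
  rw [integral_withDensity_eq_integral_smul ((measurable_gaussianPDFReal 0 1).real_toNNReal) f]
  congr 1; funext x
  simp [NNReal.smul_def, Real.coe_toNNReal _ (gaussianPDFReal_nonneg 0 1 x)]

lemma integrable_g1_iff (f : ℝ → ℝ) :
    Integrable f (gaussianReal 0 1) ↔
      Integrable (fun x => gaussianPDFReal 0 1 x * f x) := by
  rw [gaussianReal_of_var_ne_zero 0 one_ne_zero]
  rw [show gaussianPDF 0 1 = fun x => ((gaussianPDFReal 0 1 x).toNNReal : ℝ≥0∞) from rfl]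
  rw [integrable_withDensity_iff_integrable_smul ((measurable_gaussianPDFReal 0 1).real_toNNReal)]
  constructor <;> intro h <;> apply h.congr <;> filter_upwards with x <;>
    simp [NNReal.smul_def, Real.coe_toNNReal _ (gaussianPDFReal_nonneg 0 1 x)]

lemma integrable_pow_g1 (n : ℕ) : Integrable (fun x : ℝ => x ^ n) (gaussianReal 0 1) := by
  rw [integrable_g1_iff]
  apply Integrable.congr ((integrable_pow_gauss n).const_mul ((Real.sqrt (2*π))⁻¹))
  filter_upwards with x
  rw [gaussianPDFReal_zero_one]; ring

lemma integral_pow_g1 (n : ℕ) :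
    ∫ x, x ^ n ∂(gaussianReal 0 1) = (Real.sqrt (2 * π))⁻¹ * gmom n := by
  rw [integral_g1 (fun x => x ^ n)]
  rw [show (fun x : ℝ => gaussianPDFReal 0 1 x * x ^ n)
      = fun x : ℝ => (Real.sqrt (2*π))⁻¹ * (x ^ n * Real.exp (-x^2/2)) by
    funext x; rw [gaussianPDFReal_zero_one]; ring]
  rw [integral_const_mul]; rfl

lemma sqrt_two_pi_pos : 0 < Real.sqrt (2 * π) := Real.sqrt_pos.2 (by positivity)

lemma g1_pow_zero : ∫ x, x ^ 0 ∂(gaussianReal 0 1) = 1 := by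
  rw [integral_pow_g1, gmom_zero]; field_simp
lemma g1_pow_one : ∫ x, x ^ 1 ∂(gaussianReal 0 1) = 0 := by
  rw [integral_pow_g1, gmom_one]; ring
lemma g1_pow_two : ∫ x, x ^ 2 ∂(gaussianReal 0 1) = 1 := by
  rw [integral_pow_g1, gmom_two]; field_simp
lemma g1_pow_three : ∫ x, x ^ 3 ∂(gaussianReal 0 1) = 0 := by
  rw [integral_pow_g1, gmom_three]; ring
lemma g1_pow_four : ∫ x, x ^ 4 ∂(gaussianReal 0 1) = 3 := by
  rw [integral_pow_g1, gmom_four]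
  field_simp

section Pi
variable {d : ℕ}

lemma integral_stdG_prod (f : Fin d → ℝ → ℝ) :
    ∫ x, (∏ i, f i (x i)) ∂(stdGaussian d) = ∏ i, ∫ x, f i x ∂(gaussianReal 0 1) :=
  MeasureTheory.integral_fintype_prod_eq_prod (μ := fun _ => gaussianReal 0 1) f

lemma integrable_stdG_prod (f : Fin d → ℝ → ℝ)
    (hf : ∀ i, Integrable (f i) (gaussianReal 0 1)) :
    Integrable (fun x => ∏ i, f i (x i)) (stdGaussian d) :=
  MeasureTheory.Integrable.fintype_prod (μ := fun _ => gaussianReal 0 1) hf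

lemma prod_pow_single (x : Fin d → ℝ) (i : Fin d) :
    (∏ m, x m ^ (if i = m then 1 else 0)) = x i := by
  have h : ∀ m : Fin d, x m ^ (if i = m then 1 else 0) = if i = m then x m else 1 :=
    fun m => by split <;> simp
  simp only [h]
  simp [Finset.prod_ite_eq]

lemma mono2_eq (i j : Fin d) (x : Fin d → ℝ) :
    x i * x j = ∏ m, x m ^ ((if i = m then 1 else 0) + (if j = m then 1 else 0)) := by
  simp only [pow_add, Finset.prod_mul_distrib, prod_pow_single]

lemma mono4_eq (i j k l : Fin d) (x : Fin d → ℝ) :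
    x i * x j * (x k * x l) = ∏ m, x m ^
      ((if i = m then 1 else 0) + (if j = m then 1 else 0)
        + (if k = m then 1 else 0) + (if l = m then 1 else 0)) := by
  simp only [pow_add, Finset.prod_mul_distrib, prod_pow_single]
  ring

lemma integrable_monomial (e : Fin d → ℕ) :
    Integrable (fun x : Fin d → ℝ => ∏ m, x m ^ e m) (stdGaussian d) :=
  integrable_stdG_prod (fun m y => y ^ e m) (fun m => integrable_pow_g1 (e m))

lemma integral_monomial (e : Fin d → ℕ) :
    ∫ x, (∏ m, x m ^ e m) ∂(stdGaussian d) = ∏ m, ∫ y, y ^ e m ∂(gaussianReal 0 1) :=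
  integral_stdG_prod (fun m y => y ^ e m)

lemma integrable_mono2 (i j : Fin d) :
    Integrable (fun x : Fin d → ℝ => x i * x j) (stdGaussian d) := by
  simp only [mono2_eq i j]
  exact integrable_monomial _

lemma integrable_mono4 (i j k l : Fin d) :
    Integrable (fun x : Fin d → ℝ => x i * x j * (x k * x l)) (stdGaussian d) := by
  simp only [mono4_eq i j k l]
  exact integrable_monomial _

lemma integral_mono2 (i j : Fin d) :
    ∫ x, (x i * x j) ∂(stdGaussian d) = if i = j then 1 else 0 := by
  simp only [mono2_eq i j]
  rw [integral_monomial]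
  by_cases hij : i = j
  · subst hij
    simp only [if_pos rfl]
    apply Finset.prod_eq_one
    intro m _
    by_cases h : i = m
    · simp [h, g1_pow_two]
    · simp [h, g1_pow_zero]
  · rw [if_neg hij]
    apply Finset.prod_eq_zero (Finset.mem_univ i)
    have h1 : ¬ (j = i) := fun h => hij h.symm
    rw [if_pos rfl, if_neg h1]
    simpa using g1_pow_one

lemma integral_mono4 (i j k l : Fin d) :
    ∫ x, (x i * x j * (x k * x l)) ∂(stdGaussian d) =
      (if i = j then (1:ℝ) else 0) * (if k = l then 1 else 0)
      + (if i = k then 1 else 0) * (if j = l then 1 else 0)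
      + (if i = l then 1 else 0) * (if j = k then 1 else 0) := by
  simp only [mono4_eq i j k l]
  rw [integral_monomial]
  rcases eq_or_ne i j with rfl | hij
  · rcases eq_or_ne k l with rfl | hkl
    · rcases eq_or_ne i k with rfl | hik
      · -- all equal
        rw [Finset.prod_eq_single_of_mem i (Finset.mem_univ i)
          (fun m _ hm => by simp only [if_neg (Ne.symm hm)]; simpa using g1_pow_zero)]
        norm_num [g1_pow_four]
      · -- i=j, k=l, i≠k
        rw [Finset.prod_eq_one (fun m _ => ?_)]
        · simp [hik]
        · by_cases h1 : i = m
          · have h2 : ¬ k = m := fun h => hik (h1.trans h.symm)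
            simp only [if_pos h1, if_neg h2]
            simpa using g1_pow_two
          · by_cases h2 : k = m
            · simp only [if_neg h1, if_pos h2]
              simpa using g1_pow_two
            · simp only [if_neg h1, if_neg h2]
              simpa using g1_pow_zero
    · -- i=j, k≠l
      rw [Finset.prod_eq_zero (Finset.mem_univ k) ?_]
      · by_cases hik : i = k
        · have hil : ¬ i = l := fun h => hkl (hik.symm.trans h)
          simp [hik, hil, hkl]
        · by_cases hil : i = l <;> simp [hik, hil, hkl, Ne.symm hkl]
      · have hlk : ¬ l = k := fun h => hkl h.symm
        by_cases h : i = k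
        · simp only [if_pos h, if_pos rfl, if_neg hlk]
          simpa using g1_pow_three
        · simp only [if_neg h, if_pos rfl, if_neg hlk]
          simpa using g1_pow_one
  · rcases eq_or_ne k l with rfl | hkl
    · -- i≠j, k=l
      rw [Finset.prod_eq_zero (Finset.mem_univ i) ?_]
      · by_cases hik : i = k
        · have hjk : ¬ j = k := fun h => hij (hik.trans h.symm)
          simp [hij, hik, hjk, Ne.symm hjk]
        · simp [hij, hik]
      · have hji : ¬ j = i := fun h => hij h.symm
        by_cases h : k = i
        · simp only [if_pos rfl, if_neg hji, if_pos h]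
          simpa using g1_pow_three
        · simp only [if_pos rfl, if_neg hji, if_neg h]
          simpa using g1_pow_one
    · rcases eq_or_ne i k with rfl | hik
      · rcases eq_or_ne j l with rfl | hjl
        · -- i=k, j=l, i≠j
          rw [Finset.prod_eq_one (fun m _ => ?_)]
          · simp [hij, hkl]
          · by_cases h1 : i = m
            · have h2 : ¬ j = m := fun h => hij (h1.trans h.symm)
              simp only [if_pos h1, if_neg h2]
              simpa using g1_pow_two
            · by_cases h2 : j = m
              · simp only [if_neg h1, if_pos h2]
                simpa using g1_pow_two
              · simp only [if_neg h1, if_neg h2]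
                simpa using g1_pow_zero
        · -- i=k, j≠l, i≠j
          rw [Finset.prod_eq_zero (Finset.mem_univ j) ?_]
          · simp [hij, hjl, hkl, Ne.symm hij]
          · have h1 : ¬ i = j := hij
            have h3 : ¬ l = j := fun h => hjl h.symm
            simp only [if_neg h1, if_pos rfl, if_neg h3]
            simpa using g1_pow_one
      · rcases eq_or_ne i l with rfl | hil
        · rcases eq_or_ne j k with rfl | hjk
          · -- i=l, j=k, i≠j
            rw [Finset.prod_eq_one (fun m _ => ?_)]
            · simp [hij, hik]
            · by_cases h1 : i = m
              · have h2 : ¬ j = m := fun h => hij (h1.trans h.symm)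
                simp only [if_pos h1, if_neg h2]
                simpa using g1_pow_two
              · by_cases h2 : j = m
                · simp only [if_neg h1, if_pos h2]
                  simpa using g1_pow_two
                · simp only [if_neg h1, if_neg h2]
                  simpa using g1_pow_zero
          · -- i=l, j≠k, i≠j, i≠k
            rw [Finset.prod_eq_zero (Finset.mem_univ j) ?_]
            · simp [hij, hik, hjk, Ne.symm hij]
            · have h1 : ¬ i = j := hij
              have h2 : ¬ k = j := fun h => hjk h.symm
              simp only [if_neg h1, if_pos rfl, if_neg h2]
              simpa using g1_pow_one
        · -- i∉{j,k,l}
          rw [Finset.prod_eq_zero (Finset.mem_univ i) ?_]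
          · simp [hij, hik, hil]
          · have h1 : ¬ j = i := fun h => hij h.symm
            have h2 : ¬ k = i := fun h => hik h.symm
            have h3 : ¬ l = i := fun h => hil h.symm
            simp only [if_pos rfl, if_neg h1, if_neg h2, if_neg h3]
            simpa using g1_pow_one

end Pi

section Key
open Matrix
variable {d : ℕ}
open Finset in
lemma key_integral (A : Matrix (Fin d) (Fin d) ℝ) (e : ℝ) :
    ∫ x, (x ⬝ᵥ (A *ᵥ x) + e)^2 ∂(stdGaussian d)
      = (A.trace)^2 + (A*Aᵀ).trace + (A*A).trace + 2*e*A.trace + e^2 := by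
  have hS : ∀ x : Fin d → ℝ, x ⬝ᵥ (A *ᵥ x)
      = ∑ p : Fin d × Fin d, A p.1 p.2 * (x p.1 * x p.2) := by
    intro x
    simp only [dotProduct, Matrix.mulVec, Finset.mul_sum]
    rw [Fintype.sum_prod_type]
    exact Finset.sum_congr rfl fun i _ => Finset.sum_congr rfl fun j _ => by ring
  have hsq : ∀ x : Fin d → ℝ, (x ⬝ᵥ (A *ᵥ x) + e)^2
      = (∑ p : (Fin d × Fin d) × (Fin d × Fin d),
          (A p.1.1 p.1.2 * A p.2.1 p.2.2) * (x p.1.1 * x p.1.2 * (x p.2.1 * x p.2.2)))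
        + ((∑ p : Fin d × Fin d, (2*e*A p.1 p.2) * (x p.1 * x p.2)) + e^2) := by
    intro x
    rw [hS]
    have h1 : ∀ S : ℝ, (S + e)^2 = S * S + ((2*e) * S + e^2) := fun S => by ring
    rw [h1]
    congr 1
    · rw [Finset.sum_mul_sum]
      symm
      rw [Fintype.sum_prod_type]
      exact Finset.sum_congr rfl fun p _ => Finset.sum_congr rfl fun q _ => by ring
    · congr 1
      rw [Finset.mul_sum]
      exact Finset.sum_congr rfl fun p _ => by ring
  simp only [hsq]
  have If1 : Integrable (fun x : Fin d → ℝ => ∑ p : (Fin d × Fin d) × (Fin d × Fin d),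
      (A p.1.1 p.1.2 * A p.2.1 p.2.2) * (x p.1.1 * x p.1.2 * (x p.2.1 * x p.2.2)))
      (stdGaussian d) :=
    integrable_finset_sum _ (fun p _ => (integrable_mono4 _ _ _ _).const_mul _)
  have If2 : Integrable (fun x : Fin d → ℝ => ∑ p : Fin d × Fin d,
      (2*e*A p.1 p.2) * (x p.1 * x p.2)) (stdGaussian d) :=
    integrable_finset_sum _ (fun p _ => (integrable_mono2 _ _).const_mul _)
  haveI : IsProbabilityMeasure (stdGaussian d) :=
    inferInstanceAs (IsProbabilityMeasure (Measure.pi _))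
  have split : ∫ x, ((∑ p : (Fin d × Fin d) × (Fin d × Fin d),
        (A p.1.1 p.1.2 * A p.2.1 p.2.2) * (x p.1.1 * x p.1.2 * (x p.2.1 * x p.2.2)))
      + ((∑ p : Fin d × Fin d, (2*e*A p.1 p.2) * (x p.1 * x p.2)) + e^2)) ∂(stdGaussian d)
      = (∫ x, (∑ p : (Fin d × Fin d) × (Fin d × Fin d),
          (A p.1.1 p.1.2 * A p.2.1 p.2.2) * (x p.1.1 * x p.1.2 * (x p.2.1 * x p.2.2)))
          ∂(stdGaussian d))
        + ((∫ x, (∑ p : Fin d × Fin d, (2*e*A p.1 p.2) * (x p.1 * x p.2)) ∂(stdGaussian d))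
          + ∫ _x : Fin d → ℝ, e^2 ∂(stdGaussian d)) :=
    (integral_add If1 (If2.add (integrable_const _))).trans
      (congrArg _ (integral_add If2 (integrable_const _)))
  rw [split]
  have hint4 : ∀ (c : ℝ) (i j k l : Fin d),
      ∫ x, c * (x i * x j * (x k * x l)) ∂(stdGaussian d)
        = c * ((if i = j then (1:ℝ) else 0) * (if k = l then 1 else 0)
          + (if i = k then 1 else 0) * (if j = l then 1 else 0)
          + (if i = l then 1 else 0) * (if j = k then 1 else 0)) := by
    intro c i j k l
    rw [integral_const_mul, integral_mono4]
  have hint2 : ∀ (c : ℝ) (i j : Fin d),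
      ∫ x, c * (x i * x j) ∂(stdGaussian d) = c * (if i = j then (1:ℝ) else 0) := by
    intro c i j
    rw [integral_const_mul, integral_mono2]
  have E1 : (∫ x, (∑ p : (Fin d × Fin d) × (Fin d × Fin d),
      (A p.1.1 p.1.2 * A p.2.1 p.2.2) * (x p.1.1 * x p.1.2 * (x p.2.1 * x p.2.2)))
      ∂(stdGaussian d))
      = ∑ p : (Fin d × Fin d) × (Fin d × Fin d), (A p.1.1 p.1.2 * A p.2.1 p.2.2)
        * ((if p.1.1 = p.1.2 then (1:ℝ) else 0) * (if p.2.1 = p.2.2 then 1 else 0)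
          + (if p.1.1 = p.2.1 then 1 else 0) * (if p.1.2 = p.2.2 then 1 else 0)
          + (if p.1.1 = p.2.2 then 1 else 0) * (if p.1.2 = p.2.1 then 1 else 0)) :=
    (integral_finset_sum _ (fun p _ => (integrable_mono4 _ _ _ _).const_mul _)).trans
      (Finset.sum_congr rfl fun p _ => hint4 _ _ _ _ _)
  have E2 : (∫ x, (∑ p : Fin d × Fin d, (2*e*A p.1 p.2) * (x p.1 * x p.2)) ∂(stdGaussian d))
      = ∑ p : Fin d × Fin d, (2*e*A p.1 p.2) * (if p.1 = p.2 then (1:ℝ) else 0) :=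
    (integral_finset_sum _ (fun p _ => (integrable_mono2 _ _).const_mul _)).trans
      (Finset.sum_congr rfl fun p _ => hint2 _ _ _)
  rw [E1, E2, integral_const]
  simp only [measure_univ, probReal_univ, smul_eq_mul, one_mul]
  have T1 : (∑ p : (Fin d × Fin d) × (Fin d × Fin d), (A p.1.1 p.1.2 * A p.2.1 p.2.2)
      * ((if p.1.1 = p.1.2 then (1:ℝ) else 0) * (if p.2.1 = p.2.2 then 1 else 0)))
      = A.trace^2 := by
    simp only [Fintype.sum_prod_type]
    simp only [mul_ite, ite_mul, mul_one, one_mul, mul_zero, zero_mul,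
      Finset.sum_ite_eq, Finset.mem_univ, if_true]
    rw [sq, Matrix.trace, Finset.sum_mul_sum]
    simp [Matrix.diag]
  have T2 : (∑ p : (Fin d × Fin d) × (Fin d × Fin d), (A p.1.1 p.1.2 * A p.2.1 p.2.2)
      * ((if p.1.1 = p.2.1 then (1:ℝ) else 0) * (if p.1.2 = p.2.2 then 1 else 0)))
      = (A * Aᵀ).trace := by
    simp only [Fintype.sum_prod_type]
    simp only [mul_ite, ite_mul, mul_one, one_mul, mul_zero, zero_mul,
      Finset.sum_ite_eq, Finset.mem_univ, if_true]
    simp [Matrix.trace, Matrix.diag, Matrix.mul_apply]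
  have T3 : (∑ p : (Fin d × Fin d) × (Fin d × Fin d), (A p.1.1 p.1.2 * A p.2.1 p.2.2)
      * ((if p.1.1 = p.2.2 then (1:ℝ) else 0) * (if p.1.2 = p.2.1 then 1 else 0)))
      = (A * A).trace := by
    simp only [Fintype.sum_prod_type]
    simp only [mul_ite, ite_mul, mul_one, one_mul, mul_zero, zero_mul,
      Finset.sum_ite_eq, Finset.mem_univ, if_true]
    simp [Matrix.trace, Matrix.diag, Matrix.mul_apply]
  have T4 : (∑ p : Fin d × Fin d, (2*e*A p.1 p.2) * (if p.1 = p.2 then (1:ℝ) else 0))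
      = 2*e*A.trace := by
    simp only [Fintype.sum_prod_type]
    simp only [mul_ite, ite_mul, mul_one, one_mul, mul_zero, zero_mul,
      Finset.sum_ite_eq, Finset.mem_univ, if_true]
    simp [Matrix.trace, Matrix.diag, Finset.mul_sum]
  simp only [mul_add, Finset.sum_add_distrib]
  rw [T1, T2, T3, T4]
  ring
end Key

end Aux

section Aux2
open Matrix

lemma deriv_poly4 (a₀ a₁ a₂ a₃ a₄ : ℝ) :
    deriv (fun t : ℝ => a₀ + a₁ * t + a₂ * t^2 + a₃ * t^3 + a₄ * t^4) 0 = a₁ := by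
  have h : HasDerivAt (fun t : ℝ => a₀ + a₁ * t + a₂ * t^2 + a₃ * t^3 + a₄ * t^4)
      (0 + a₁ * 1 + a₂ * (2 * (0:ℝ)^1) + a₃ * (3 * (0:ℝ)^2) + a₄ * (4 * (0:ℝ)^3)) 0 := by
    exact ((((hasDerivAt_const (0:ℝ) a₀).add (((hasDerivAt_id (0:ℝ)).const_mul a₁))).add
      ((hasDerivAt_pow 2 (0:ℝ)).const_mul a₂)).add
      ((hasDerivAt_pow 3 (0:ℝ)).const_mul a₃)).add
      ((hasDerivAt_pow 4 (0:ℝ)).const_mul a₄)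
  rw [h.deriv]; norm_num

lemma quad_path (A₀ M C : Matrix (Fin d) (Fin d) ℝ) (e₀ h : ℝ) :
    deriv (fun t : ℝ => ((A₀ - t•M - (t*t)•C).trace)^2
      + ((A₀ - t•M - (t*t)•C) * (A₀ - t•M - (t*t)•C)ᵀ).trace
      + ((A₀ - t•M - (t*t)•C) * (A₀ - t•M - (t*t)•C)).trace
      + 2*(e₀ - t*h)*((A₀ - t•M - (t*t)•C).trace) + (e₀ - t*h)^2) 0
    = -(2*A₀.trace*M.trace) - (A₀*Mᵀ).trace - (M*A₀ᵀ).trace - (A₀*M).trace - (M*A₀).trace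
      - 2*e₀*M.trace - 2*h*A₀.trace - 2*e₀*h := by
  have hfun : (fun t : ℝ => ((A₀ - t•M - (t*t)•C).trace)^2
      + ((A₀ - t•M - (t*t)•C) * (A₀ - t•M - (t*t)•C)ᵀ).trace
      + ((A₀ - t•M - (t*t)•C) * (A₀ - t•M - (t*t)•C)).trace
      + 2*(e₀ - t*h)*((A₀ - t•M - (t*t)•C).trace) + (e₀ - t*h)^2)
      = fun t : ℝ =>
        (A₀.trace^2 + (A₀*A₀ᵀ).trace + (A₀*A₀).trace + 2*e₀*A₀.trace + e₀^2)
        + (-(2*A₀.trace*M.trace) - (A₀*Mᵀ).trace - (M*A₀ᵀ).trace - (A₀*M).trace - (M*A₀).trace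
            - 2*e₀*M.trace - 2*h*A₀.trace - 2*e₀*h) * t
        + (M.trace^2 - 2*A₀.trace*C.trace + (M*Mᵀ).trace - (A₀*Cᵀ).trace - (C*A₀ᵀ).trace
            + (M*M).trace - (A₀*C).trace - (C*A₀).trace + 2*h*M.trace - 2*e₀*C.trace + h^2) * t^2
        + (2*M.trace*C.trace + (M*Cᵀ).trace + (C*Mᵀ).trace + (M*C).trace + (C*M).trace
            + 2*h*C.trace) * t^3
        + (C.trace^2 + (C*Cᵀ).trace + (C*C).trace) * t^4 := by
    funext t
    simp only [Matrix.sub_mul, Matrix.mul_sub, Matrix.transpose_sub, Matrix.transpose_smul,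
      Matrix.smul_mul, Matrix.mul_smul, Matrix.trace_sub, Matrix.trace_smul, smul_smul,
      smul_eq_mul]
    ring
  rw [hfun, deriv_poly4]

lemma trace_tmul_self_eq_zero {m n : ℕ} (X : Matrix (Fin m) (Fin n) ℝ)
    (h : (X * Xᵀ).trace = 0) : X = 0 := by
  have h' : ∑ i, ∑ j, X i j ^ 2 = 0 := by
    simpa [Matrix.trace, Matrix.diag, Matrix.mul_apply, sq] using h
  ext i j
  have h1 := (Finset.sum_eq_zero_iff_of_nonneg
    (fun i _ => Finset.sum_nonneg fun j _ => sq_nonneg (X i j))).1 h' i (Finset.mem_univ i)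
  have h2 := (Finset.sum_eq_zero_iff_of_nonneg
    (fun j _ => sq_nonneg (X i j))).1 h1 j (Finset.mem_univ j)
  simpa using sq_eq_zero_iff.mp h2

lemma proj_exists (B Γ : Matrix (Fin d) (Fin d) ℝ) (hBsym : Bᵀ = B) (hΓsym : Γᵀ = Γ)
    (hBΓ : B * Γ = Γ * Γ) :
    ∃ P : Matrix (Fin d) (Fin d) ℝ,
      P.IsSymm ∧ P * P = P ∧ B * P = P * B ∧ Γ = P * B * P := by
  have hΓherm : Γ.IsHermitian := by
    rw [Matrix.IsHermitian, Matrix.conjTranspose_eq_transpose_of_trivial, hΓsym]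
  set U : Matrix (Fin d) (Fin d) ℝ := (hΓherm.eigenvectorUnitary : Matrix (Fin d) (Fin d) ℝ)
    with hUdef
  set ev : Fin d → ℝ := hΓherm.eigenvalues with hevdef
  have hU1 : star U * U = 1 := hΓherm.eigenvectorUnitary.2.1
  have hU2 : U * star U = 1 := hΓherm.eigenvectorUnitary.2.2
  have hU1' : ∀ X : Matrix (Fin d) (Fin d) ℝ, star U * (U * X) = X := fun X => by
    rw [← mul_assoc, hU1, one_mul]
  have hU2' : ∀ X : Matrix (Fin d) (Fin d) ℝ, U * (star U * X) = X := fun X => by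
    rw [← mul_assoc, hU2, one_mul]
  set D : Matrix (Fin d) (Fin d) ℝ := Matrix.diagonal ev with hDdef
  have hspec : Γ = U * D * star U := by
    have := hΓherm.spectral_theorem
    simpa using this
  set E : Matrix (Fin d) (Fin d) ℝ := Matrix.diagonal (fun i => if ev i = 0 then 0 else 1)
    with hEdef
  set C : Matrix (Fin d) (Fin d) ℝ := star U * B * U with hCdef
  have hB' : B = U * C * star U := by
    rw [hCdef, mul_assoc, mul_assoc, hU2, mul_one, hU2' B]
  have hCD : C * D = D * D := by
    have h1 : B * (U * D * star U) = (U * D * star U) * (U * D * star U) := by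
      rw [← hspec]; exact hBΓ
    calc C * D = star U * ((B * (U * D * star U)) * U) := by
          rw [hCdef]
          simp only [mul_assoc, hU1', hU1, mul_one]
      _ = star U * (((U * D * star U) * (U * D * star U)) * U) := by rw [h1]
      _ = D * D := by
          simp only [mul_assoc, hU1', hU1, mul_one]
  have hC : ∀ i j, C i j * ev j = (if i = j then ev i * ev j else 0) := by
    intro i j
    have := congrFun (congrFun hCD i) j
    simpa [hDdef, Matrix.mul_diagonal, Matrix.diagonal_mul_diagonal, Matrix.diagonal_apply]
      using this
  have hCE : C * E = D := by
    ext i j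
    rw [hEdef, Matrix.mul_diagonal, hDdef, Matrix.diagonal_apply]
    by_cases hj : ev j = 0
    · simp only [if_pos hj, mul_zero]
      by_cases hij : i = j
      · rw [if_pos hij, hij, hj]
      · rw [if_neg hij]
    · simp only [if_neg hj, mul_one]
      have h1 := hC i j
      by_cases hij : i = j
      · rw [if_pos hij] at h1 ⊢
        subst hij
        exact mul_right_cancel₀ hj (h1.trans (by ring))
      · rw [if_neg hij] at h1 ⊢
        exact mul_right_cancel₀ hj (h1.trans (by ring))
  have hED : E * D = D := by
    ext i j
    rw [hEdef, hDdef, Matrix.diagonal_mul_diagonal]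
    simp only [Matrix.diagonal_apply, Pi.mul_apply]
    by_cases hij : i = j
    · subst hij
      by_cases h : ev i = 0 <;> simp [h]
    · simp [hij]
  refine ⟨U * E * star U, ?_, ?_, ?_, ?_⟩
  · -- symmetry
    show (U * E * star U)ᵀ = U * E * star U
    have hstar : star U = Uᵀ := Matrix.conjTranspose_eq_transpose_of_trivial U
    rw [hstar, Matrix.transpose_mul, Matrix.transpose_mul, Matrix.transpose_transpose,
      hEdef, Matrix.diagonal_transpose, mul_assoc]
  · rw [mul_assoc, mul_assoc]
    rw [show star U * (U * E * star U) = E * star U from by rw [← mul_assoc, ← mul_assoc, hU1, one_mul]]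
    rw [show E * (E * star U) = E * star U from by
      rw [← mul_assoc]
      congr 1
      ext i j
      rw [hEdef, Matrix.diagonal_mul_diagonal]
      simp only [Matrix.diagonal_apply, Pi.mul_apply]
      by_cases hij : i = j
      · subst hij
        by_cases h : ev i = 0 <;> simp [h]
      · simp [hij]]
    rw [← mul_assoc]
  · -- B * P = P * B
    have hBP : B * (U * E * star U) = Γ := by
      rw [hB', hspec, ← hCE]
      simp only [mul_assoc, hU1']
    have hPB : (U * E * star U) * B = Γ := by
      have h1 : ((U * E * star U) * B)ᵀ = Γ := by
        rw [Matrix.transpose_mul, hBsym]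
        have hPsym : (U * E * star U)ᵀ = U * E * star U := by
          have hstar : star U = Uᵀ := Matrix.conjTranspose_eq_transpose_of_trivial U
          rw [hstar, Matrix.transpose_mul, Matrix.transpose_mul, Matrix.transpose_transpose,
            hEdef, Matrix.diagonal_transpose, mul_assoc]
        rw [hPsym, hBP]
      have := congrArg Matrix.transpose h1
      rwa [Matrix.transpose_transpose, hΓsym] at this
    rw [hBP, hPB]
  · -- Γ = P * B * P
    have hBP : B * (U * E * star U) = Γ := by
      rw [hB', hspec, ← hCE]
      simp only [mul_assoc, hU1']
    have hPΓ : (U * E * star U) * Γ = Γ := by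
      rw [hspec]
      calc (U*E*star U)*(U*D*star U) = U*(E*(D*star U)) := by simp only [mul_assoc, hU1']
        _ = U*(D*star U) := by rw [← mul_assoc E D, hED]
        _ = U*D*star U := by rw [← mul_assoc]
    rw [mul_assoc, hBP, hPΓ]

end Aux2

/-- at any critical point `(W₀, c₀)` of the population risk
`L(W,c) = E[(⟨xxᵀ, B - WWᵀ⟩ + b₀ - c)²]` (criticality expressed via vanishing
directional derivatives), one has `B W₀ = W₀W₀ᵀW₀`, `c₀ = b₀ + Tr(B - W₀W₀ᵀ)`,
and `W₀W₀ᵀ = P B P` for an orthogonal projection `P` commuting with `B`. -/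
theorem stmt_14 (d N : ℕ) (B : Matrix (Fin d) (Fin d) ℝ) (hB : B.PosSemidef)
    (b₀ : ℝ) (W₀ : Matrix (Fin d) (Fin N) ℝ) (c₀ : ℝ)
    (L : Matrix (Fin d) (Fin N) ℝ → ℝ → ℝ)
    (hL : ∀ W c, L W c =
      ∫ x, (x ⬝ᵥ ((B - W * Wᵀ) *ᵥ x) + b₀ - c) ^ 2 ∂(stdGaussian d))
    (hcrit : ∀ (Z : Matrix (Fin d) (Fin N) ℝ) (h : ℝ),
      deriv (fun t : ℝ => L (W₀ + t • Z) (c₀ + t * h)) 0 = 0) :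
    B * W₀ = W₀ * W₀ᵀ * W₀ ∧
    c₀ = b₀ + (B - W₀ * W₀ᵀ).trace ∧
    ∃ P : Matrix (Fin d) (Fin d) ℝ,
      P.IsSymm ∧ P * P = P ∧ B * P = P * B ∧ W₀ * W₀ᵀ = P * B * P := by
  have hBsym : Bᵀ = B := by
    have h := hB.1.eq
    rwa [Matrix.conjTranspose_eq_transpose_of_trivial] at h
  have hΓsym : (W₀*W₀ᵀ)ᵀ = W₀*W₀ᵀ := by
    rw [Matrix.transpose_mul, Matrix.transpose_transpose]
  set A₀ : Matrix (Fin d) (Fin d) ℝ := B - W₀ * W₀ᵀ with hA₀def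
  have hA₀sym : A₀ᵀ = A₀ := by rw [hA₀def, Matrix.transpose_sub, hBsym, hΓsym]
  have hLW : ∀ (W : Matrix (Fin d) (Fin N) ℝ) (c : ℝ), L W c =
      ((B - W*Wᵀ).trace)^2 + ((B-W*Wᵀ)*(B-W*Wᵀ)ᵀ).trace + ((B-W*Wᵀ)*(B-W*Wᵀ)).trace
        + 2*(b₀-c)*(B-W*Wᵀ).trace + (b₀-c)^2 := by
    intro W c
    rw [hL]
    rw [show (fun x : Fin d → ℝ => (x ⬝ᵥ ((B - W*Wᵀ) *ᵥ x) + b₀ - c)^2)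
        = fun x : Fin d → ℝ => (x ⬝ᵥ ((B - W*Wᵀ) *ᵥ x) + (b₀ - c))^2 from
      funext fun x => by ring]
    exact key_integral _ _
  have hderiv : ∀ (Z : Matrix (Fin d) (Fin N) ℝ) (h : ℝ),
      -(2*A₀.trace*(Z*W₀ᵀ + W₀*Zᵀ).trace) - (A₀*(Z*W₀ᵀ + W₀*Zᵀ)ᵀ).trace
        - ((Z*W₀ᵀ + W₀*Zᵀ)*A₀ᵀ).trace - (A₀*(Z*W₀ᵀ + W₀*Zᵀ)).trace
        - ((Z*W₀ᵀ + W₀*Zᵀ)*A₀).trace - 2*(b₀-c₀)*(Z*W₀ᵀ + W₀*Zᵀ).trace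
        - 2*h*A₀.trace - 2*(b₀-c₀)*h = 0 := by
    intro Z h
    have hmat : ∀ t : ℝ, B - (W₀ + t•Z)*(W₀ + t•Z)ᵀ
        = A₀ - t•(Z*W₀ᵀ + W₀*Zᵀ) - (t*t)•(Z*Zᵀ) := by
      intro t
      rw [hA₀def]
      simp only [Matrix.transpose_add, Matrix.transpose_smul, Matrix.add_mul, Matrix.mul_add,
        Matrix.smul_mul, Matrix.mul_smul, smul_smul, smul_add, sub_sub]
      abel
    have hfun : (fun t : ℝ => L (W₀ + t • Z) (c₀ + t * h))
        = fun t : ℝ =>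
          ((A₀ - t•(Z*W₀ᵀ + W₀*Zᵀ) - (t*t)•(Z*Zᵀ)).trace)^2
          + ((A₀ - t•(Z*W₀ᵀ + W₀*Zᵀ) - (t*t)•(Z*Zᵀ))
              * (A₀ - t•(Z*W₀ᵀ + W₀*Zᵀ) - (t*t)•(Z*Zᵀ))ᵀ).trace
          + ((A₀ - t•(Z*W₀ᵀ + W₀*Zᵀ) - (t*t)•(Z*Zᵀ))
              * (A₀ - t•(Z*W₀ᵀ + W₀*Zᵀ) - (t*t)•(Z*Zᵀ))).trace
          + 2*((b₀-c₀) - t*h)*((A₀ - t•(Z*W₀ᵀ + W₀*Zᵀ) - (t*t)•(Z*Zᵀ)).trace)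
          + ((b₀-c₀) - t*h)^2 := by
      funext t
      rw [hLW, hmat t, show b₀ - (c₀ + t*h) = (b₀ - c₀) - t*h from by ring]
    have hc := hcrit Z h
    rw [hfun, quad_path] at hc
    exact hc
  -- Z = 0, h = 1
  have h1 := hderiv 0 1
  simp only [Matrix.zero_mul, Matrix.transpose_zero, Matrix.mul_zero, add_zero,
    Matrix.trace_zero, mul_zero, zero_sub, sub_zero, mul_one, zero_mul, neg_zero,
    zero_add] at h1
  have htr : b₀ - c₀ = -A₀.trace := by linarith
  have hc₀ : c₀ = b₀ + (B - W₀ * W₀ᵀ).trace := by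
    rw [← hA₀def]; linarith
  -- Z = A₀ * W₀, h = 0
  have h2 := hderiv (A₀ * W₀) 0
  set M : Matrix (Fin d) (Fin d) ℝ := A₀ * W₀ * W₀ᵀ + W₀ * (A₀ * W₀)ᵀ with hMdef
  have hMsym : Mᵀ = M := by
    rw [hMdef]
    simp only [Matrix.transpose_add, Matrix.transpose_mul, Matrix.transpose_transpose]
    abel
  have ht1 : (A₀ * (W₀ * (A₀ * W₀)ᵀ)).trace = ((A₀ * W₀) * (A₀ * W₀)ᵀ).trace := by
    rw [← Matrix.mul_assoc]
  have ht2 : (A₀ * (A₀ * W₀ * W₀ᵀ)).trace = ((A₀ * W₀) * (A₀ * W₀)ᵀ).trace := by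
    rw [Matrix.trace_mul_comm, Matrix.mul_assoc (A₀*W₀) W₀ᵀ A₀, Matrix.transpose_mul, hA₀sym]
  have hAM : (A₀ * M).trace = 2 * ((A₀ * W₀) * (A₀ * W₀)ᵀ).trace := by
    rw [hMdef, Matrix.mul_add, Matrix.trace_add, ht1, ht2]; ring
  have hMA : (M * A₀).trace = (A₀ * M).trace := Matrix.trace_mul_comm M A₀
  rw [hMsym, hA₀sym, hMA, hAM, htr] at h2
  have hXXt : ((A₀ * W₀) * (A₀ * W₀)ᵀ).trace = 0 := by
    simp only [Matrix.trace_zero, mul_zero, sub_zero, zero_mul] at h2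
    linarith
  have hX0 : A₀ * W₀ = 0 := trace_tmul_self_eq_zero _ hXXt
  have hBW : B * W₀ = W₀ * W₀ᵀ * W₀ := by
    have hz : (B - W₀ * W₀ᵀ) * W₀ = 0 := hX0
    rw [Matrix.sub_mul] at hz
    exact sub_eq_zero.1 hz
  refine ⟨hBW, hc₀, ?_⟩
  have hBΓ : B * (W₀*W₀ᵀ) = (W₀*W₀ᵀ) * (W₀*W₀ᵀ) := by
    rw [← Matrix.mul_assoc, hBW, Matrix.mul_assoc]
  obtain ⟨P, hs, hi, hcomm, heq⟩ := proj_exists B (W₀*W₀ᵀ) hBsym hΓsym hBΓ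
  exact ⟨P, hs, hi, hcomm, heq⟩
end
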